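/- arXiv:1304.0490 — 8 statements merged into one kernel-verified Lean document; each statement's English description precedes it below -/
import Mathlib

section
/- Let σ be a distortion, τ_σ(p) := ∫₀^p σ(u) du, and τ_σ⁻¹(u) := inf{p ∈ [0,1] : τ_σ(p) ≥ u}. Let L be a real random variable and U a uniformly distributed random variable on the same probability space, and set L_σ := F_L⁻¹(τ_σ⁻¹(U)). Then for every y ∈ ℝ at which both sides are continuous (equivalently, for Lebesgue-almost every y ∈ ℝ), P(L_σ ≤ y) = τ_σ(F_L(y)). -/
open MeasureTheory Set
open scoped ENNReal

/-- The cumulative distribution function `F_L(x) = P(L ≤ x)` of a random variable `L`. -/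
noncomputable def cdfRV {Ω : Type*} [MeasurableSpace Ω] (P : Measure Ω) (L : Ω → ℝ) (x : ℝ) : ℝ :=
  (P {ω | L ω ≤ x}).toReal

/-- The generalized inverse (quantile function) `F_L⁻¹(u) = inf {x : F_L(x) ≥ u}`. -/
noncomputable def quantileRV {Ω : Type*} [MeasurableSpace Ω] (P : Measure Ω) (L : Ω → ℝ)
    (u : ℝ) : ℝ :=
  sInf {x : ℝ | u ≤ cdfRV P L x}

/-- `τ_σ(p) = ∫₀^p σ(u) du`, the antiderivative of the distortion `σ`. -/
noncomputable def tauSigma (σ : ℝ → ℝ) (p : ℝ) : ℝ := ∫ u in (0:ℝ)..p, σ u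

/-- The generalized inverse `τ_σ⁻¹(u) = inf {p ∈ [0,1] : τ_σ(p) ≥ u}`. -/
noncomputable def tauSigmaInv (σ : ℝ → ℝ) (u : ℝ) : ℝ :=
  sInf {p : ℝ | p ∈ Icc (0:ℝ) 1 ∧ u ≤ tauSigma σ p}

/-- `U` is uniformly distributed: `P(U ≤ u) = u` for all `u ∈ [0,1]`. -/
def IsUniformRV {Ω : Type*} [MeasurableSpace Ω] (P : Measure Ω) (U : Ω → ℝ) : Prop :=
  ∀ u ∈ Icc (0:ℝ) 1, (P {ω | U ω ≤ u}).toReal = u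

open Filter Topology in
/-- If `v ≤ f x` on `S` and `f` is continuous (within a superset `T` of `S`) at `sInf S`, then
`v ≤ f (sInf S)`. -/
private lemma key_lemma {v : ℝ} {f : ℝ → ℝ} {S T : Set ℝ} (hS : S.Nonempty) (hb : BddBelow S)
    (hST : S ⊆ T) (hf : ContinuousWithinAt f T (sInf S)) (hle : ∀ x ∈ S, v ≤ f x) :
    v ≤ f (sInf S) := by
  have hne : (𝓝[S] (sInf S)).NeBot :=
    mem_closure_iff_nhdsWithin_neBot.mp (csInf_mem_closure hS hb)
  have ht : Tendsto f (𝓝[S] (sInf S)) (𝓝 (f (sInf S))) :=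
    hf.mono_left (nhdsWithin_mono _ hST)
  exact ge_of_tendsto ht (eventually_nhdsWithin_of_forall hle)

open Filter Topology ProbabilityTheory in
/-- for the distorted loss `L_σ = F_L⁻¹(τ_σ⁻¹(U))` one has,
for Lebesgue-almost every `y ∈ ℝ`, `P(L_σ ≤ y) = τ_σ(F_L(y))`. -/
theorem statement_1 {Ω : Type*} [MeasurableSpace Ω] (P : Measure Ω) [IsProbabilityMeasure P]
    (L : Ω → ℝ) (hL : Measurable L)
    (σ : ℝ → ℝ)
    (hσ_nonneg : ∀ u ∈ Icc (0:ℝ) 1, 0 ≤ σ u)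
    (hσ_mono : MonotoneOn σ (Icc (0:ℝ) 1))
    (hσ_int : ∫ u in (0:ℝ)..1, σ u = 1)
    (U : Ω → ℝ) (hU : Measurable U) (hUunif : IsUniformRV P U)
    (Lσ : Ω → ℝ) (hLσ : Lσ = fun ω => quantileRV P L (tauSigmaInv σ (U ω))) :
    ∀ᵐ y ∂(volume : Measure ℝ),
      (P {ω | Lσ ω ≤ y}).toReal = tauSigma σ (cdfRV P L y) := by
  -- the pushforward measure and its cdf
  set μ : Measure ℝ := P.map L with hμdef
  have hμprob : IsProbabilityMeasure μ := Measure.isProbabilityMeasure_map hL.aemeasurable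
  have hFeq : ∀ x, cdfRV P L x = cdf μ x := by
    intro x
    rw [cdf_eq_real, measureReal_def, hμdef, Measure.map_apply hL measurableSet_Iic]
    rfl
  -- basic facts about τ
  have hIcc : uIcc (0:ℝ) 1 = Icc 0 1 := uIcc_of_le zero_le_one
  have hii : ∀ a ∈ Icc (0:ℝ) 1, ∀ b ∈ Icc (0:ℝ) 1, IntervalIntegrable σ volume a b := by
    intro a ha b hb
    apply MonotoneOn.intervalIntegrable
    apply hσ_mono.mono
    rw [← hIcc] at ha hb ⊢
    exact uIcc_subset_uIcc ha hb
  have h0m : (0:ℝ) ∈ Icc (0:ℝ) 1 := ⟨le_refl 0, zero_le_one⟩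
  have h1m : (1:ℝ) ∈ Icc (0:ℝ) 1 := ⟨zero_le_one, le_refl 1⟩
  have hτmono : MonotoneOn (tauSigma σ) (Icc (0:ℝ) 1) := by
    intro p hp q hq hpq
    have h1 : tauSigma σ p + ∫ u in p..q, σ u = tauSigma σ q :=
      intervalIntegral.integral_add_adjacent_intervals (hii 0 h0m p hp) (hii p hp q hq)
    have h2 : 0 ≤ ∫ u in p..q, σ u :=
      intervalIntegral.integral_nonneg hpq
        (fun u hu => hσ_nonneg u ⟨le_trans hp.1 hu.1, le_trans hu.2 hq.2⟩)
    linarith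
  have hτ0 : tauSigma σ 0 = 0 := intervalIntegral.integral_same
  have hτ1 : tauSigma σ 1 = 1 := hσ_int
  have hτcont : ContinuousOn (tauSigma σ) (Icc (0:ℝ) 1) := by
    have h := intervalIntegral.continuousOn_primitive_interval'
      (μ := volume) (f := σ) (b₁ := 0) (b₂ := 1) (a := 0)
      (hii 0 h0m 1 h1m) left_mem_uIcc
    rw [hIcc] at h
    exact h
  -- facts about τ⁻¹
  have hτinv : ∀ u ∈ Ioo (0:ℝ) 1, tauSigmaInv σ u ∈ Ioo (0:ℝ) 1 ∧
      u ≤ tauSigma σ (tauSigmaInv σ u) := by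
    intro u hu
    set S : Set ℝ := {p : ℝ | p ∈ Icc (0:ℝ) 1 ∧ u ≤ tauSigma σ p} with hSdef
    have h1S : (1:ℝ) ∈ S := ⟨h1m, by rw [hτ1]; exact hu.2.le⟩
    have hSne : S.Nonempty := ⟨1, h1S⟩
    have hSbdd : BddBelow S := ⟨0, fun p hp => hp.1.1⟩
    have hcm : sInf S ∈ Icc (0:ℝ) 1 :=
      ⟨le_csInf hSne (fun p hp => hp.1.1), csInf_le hSbdd h1S⟩
    have hb : u ≤ tauSigma σ (sInf S) :=
      key_lemma hSne hSbdd (fun p hp => hp.1) (hτcont.continuousWithinAt hcm)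
        (fun p hp => hp.2)
    have hpos : 0 < sInf S := by
      rcases lt_or_eq_of_le hcm.1 with h | h
      · exact h
      · exfalso
        rw [← h, hτ0] at hb
        exact absurd hb (not_le.mpr hu.1)
    have hlt1 : sInf S < 1 := by
      -- find p < 1 with u < τ p
      have hne1 : (𝓝[Ico (0:ℝ) 1] 1).NeBot := by
        rw [← mem_closure_iff_nhdsWithin_neBot, closure_Ico (by norm_num : (0:ℝ) ≠ 1)]
        exact h1m
      have htd : Tendsto (tauSigma σ) (𝓝[Ico (0:ℝ) 1] 1) (𝓝 1) := by
        have h := (hτcont.continuousWithinAt h1m).mono_left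
          (nhdsWithin_mono _ Ico_subset_Icc_self)
        rwa [hτ1] at h
      obtain ⟨p, hup, hpIco⟩ := ((htd.eventually_const_lt hu.2).and
        eventually_mem_nhdsWithin).exists
      exact lt_of_le_of_lt (csInf_le hSbdd ⟨⟨hpIco.1, hpIco.2.le⟩, hup.le⟩) hpIco.2
    exact ⟨⟨hpos, hlt1⟩, hb⟩
  -- the Galois-type equivalence for τ⁻¹
  have hτgal : ∀ u ∈ Ioo (0:ℝ) 1, ∀ q ∈ Icc (0:ℝ) 1,
      (tauSigmaInv σ u ≤ q ↔ u ≤ tauSigma σ q) := by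
    intro u hu q hq
    constructor
    · intro h
      have hcm : tauSigmaInv σ u ∈ Icc (0:ℝ) 1 :=
        ⟨(hτinv u hu).1.1.le, (hτinv u hu).1.2.le⟩
      exact le_trans (hτinv u hu).2 (hτmono hcm hq h)
    · intro h
      exact csInf_le ⟨0, fun p hp => hp.1.1⟩ ⟨hq, h⟩
  -- the Galois-type equivalence for the quantile function
  have hqgal : ∀ v ∈ Ioo (0:ℝ) 1, ∀ y : ℝ,
      (quantileRV P L v ≤ y ↔ v ≤ cdfRV P L y) := by
    intro v hv y
    have hSeq : {x : ℝ | v ≤ cdfRV P L x} = {x : ℝ | v ≤ cdf μ x} := by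
      ext x; rw [mem_setOf_eq, mem_setOf_eq, hFeq]
    have hSne : {x : ℝ | v ≤ cdf μ x}.Nonempty := by
      obtain ⟨x, hx⟩ := ((tendsto_cdf_atTop μ).eventually_const_lt hv.2).exists
      exact ⟨x, hx.le⟩
    have hSbdd : BddBelow {x : ℝ | v ≤ cdf μ x} := by
      obtain ⟨x₀, hx₀⟩ := ((tendsto_cdf_atBot μ).eventually_lt_const hv.1).exists
      refine ⟨x₀, fun x hx => ?_⟩
      by_contra hlt
      exact absurd (le_trans hx ((cdf μ).mono (le_of_lt (not_le.mp hlt))))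
        (not_le.mpr hx₀)
    have hq : quantileRV P L v = sInf {x : ℝ | v ≤ cdf μ x} := by
      rw [quantileRV, hSeq]
    constructor
    · intro h
      have hb : v ≤ cdf μ (sInf {x : ℝ | v ≤ cdf μ x}) :=
        key_lemma hSne hSbdd (fun x hx => csInf_le hSbdd hx)
          ((cdf μ).right_continuous _) (fun x hx => hx)
      rw [hFeq]
      exact le_trans hb ((cdf μ).mono (by rw [← hq]; exact h))
    · intro h
      rw [hq]
      exact csInf_le hSbdd (by rw [mem_setOf_eq, ← hFeq]; exact h)
  -- the almost sure set A
  set A : Set Ω := {ω | 0 < U ω ∧ U ω < 1} with hAdef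
  have hU1meas : ∀ c : ℝ, MeasurableSet {ω | U ω ≤ c} := fun c => hU measurableSet_Iic
  have hPU : ∀ c ∈ Icc (0:ℝ) 1, P {ω | U ω ≤ c} = ENNReal.ofReal c := by
    intro c hc
    have h := hUunif c hc
    have h2 := ENNReal.ofReal_toReal (measure_ne_top P {ω | U ω ≤ c})
    rw [h] at h2
    exact h2.symm
  have hAnull : P Aᶜ = 0 := by
    have hsub : Aᶜ ⊆ {ω | U ω ≤ 0} ∪ ({ω | U ω = 1} ∪ {ω | U ω ≤ 1}ᶜ) := by
      intro ω hω
      rw [hAdef, mem_compl_iff, mem_setOf_eq, not_and_or, not_lt, not_lt] at hω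
      rcases hω with h | h
      · exact Or.inl h
      · rcases eq_or_lt_of_le h with h' | h'
        · exact Or.inr (Or.inl h'.symm)
        · exact Or.inr (Or.inr (by simpa using not_le.mpr h'))
    refine le_antisymm (le_trans (measure_mono hsub) ?_) zero_le
    have h1 : P {ω | U ω ≤ 0} = 0 := by
      rw [hPU 0 h0m, ENNReal.ofReal_zero]
    have h2 : P ({ω | U ω ≤ 1}ᶜ) = 0 := by
      rw [measure_compl (hU1meas 1) (measure_ne_top P _), hPU 1 h1m, ENNReal.ofReal_one,
        measure_univ, tsub_self]
    have h3 : P {ω | U ω = 1} = 0 := by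
      have hε : ∀ ε : ℝ, 0 < ε → ε < 1 → (P {ω | U ω = 1}).toReal ≤ ε := by
        intro ε hε0 hε1
        have hsub2 : {ω | U ω = 1} ⊆ {ω | U ω ≤ 1} \ {ω | U ω ≤ 1 - ε} := by
          intro ω hω
          rw [mem_setOf_eq] at hω
          refine ⟨le_of_eq hω, fun h' => ?_⟩
          rw [mem_setOf_eq, hω] at h'
          linarith
        have hss : {ω | U ω ≤ 1 - ε} ⊆ {ω | U ω ≤ 1} := by
          intro ω hω
          rw [mem_setOf_eq] at hω ⊢
          linarith
        have hdiff : P ({ω | U ω ≤ 1} \ {ω | U ω ≤ 1 - ε})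
            = P {ω | U ω ≤ 1} - P {ω | U ω ≤ 1 - ε} :=
          measure_diff hss (hU1meas _).nullMeasurableSet (measure_ne_top P _)
        have h1e : P {ω | U ω ≤ 1 - ε} = ENNReal.ofReal (1 - ε) :=
          hPU (1 - ε) ⟨by linarith, by linarith⟩
        calc (P {ω | U ω = 1}).toReal
            ≤ (P ({ω | U ω ≤ 1} \ {ω | U ω ≤ 1 - ε})).toReal :=
              ENNReal.toReal_mono (measure_ne_top P _) (measure_mono hsub2)
          _ = ε := by
              rw [hdiff, hPU 1 h1m, h1e, ← ENNReal.ofReal_sub _ (by linarith)]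
              rw [ENNReal.toReal_ofReal (by linarith)]
              ring
      have h0 : (P {ω | U ω = 1}).toReal ≤ 0 := by
        by_contra h
        push_neg at h
        have hx := hε (min ((P {ω | U ω = 1}).toReal / 2) (1/2))
          (lt_min (by linarith) (by norm_num))
          (lt_of_le_of_lt (min_le_right _ _) (by norm_num))
        have := min_le_left ((P {ω | U ω = 1}).toReal / 2) (1/2)
        linarith
      have h0' : (P {ω | U ω = 1}).toReal = 0 :=
        le_antisymm h0 ENNReal.toReal_nonneg
      rw [ENNReal.toReal_eq_zero_iff] at h0'
      exact h0'.resolve_right (measure_ne_top P _)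
    calc P ({ω | U ω ≤ 0} ∪ ({ω | U ω = 1} ∪ {ω | U ω ≤ 1}ᶜ))
        ≤ P {ω | U ω ≤ 0} + (P {ω | U ω = 1} + P ({ω | U ω ≤ 1}ᶜ)) :=
          le_trans (measure_union_le _ _) (by gcongr; exact measure_union_le _ _)
      _ = 0 := by rw [h1, h2, h3]; simp
  -- the cdf value F_L(y) is in [0,1]
  have hFmem : ∀ y : ℝ, cdfRV P L y ∈ Icc (0:ℝ) 1 := by
    intro y
    rw [hFeq]
    exact ⟨cdf_nonneg μ y, cdf_le_one μ y⟩
  -- main pointwise identity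
  have hmain : ∀ y : ℝ, (P {ω | Lσ ω ≤ y}).toReal = tauSigma σ (cdfRV P L y) := by
    intro y
    set t : ℝ := tauSigma σ (cdfRV P L y) with htdef
    have htmem : t ∈ Icc (0:ℝ) 1 := by
      constructor
      · rw [htdef, ← hτ0]; exact hτmono h0m (hFmem y) (hFmem y).1
      · rw [htdef, ← hτ1]; exact hτmono (hFmem y) h1m (hFmem y).2
    have hset : {ω | Lσ ω ≤ y} ∩ A = {ω | U ω ≤ t} ∩ A := by
      ext ω
      simp only [mem_inter_iff, mem_setOf_eq, hLσ]
      refine and_congr_left fun hAω => ?_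
      have hu : U ω ∈ Ioo (0:ℝ) 1 := hAω
      have hv : tauSigmaInv σ (U ω) ∈ Ioo (0:ℝ) 1 := (hτinv (U ω) hu).1
      rw [hqgal _ hv y, hτgal (U ω) hu (cdfRV P L y) (hFmem y)]
    calc (P {ω | Lσ ω ≤ y}).toReal
        = (P ({ω | Lσ ω ≤ y} ∩ A)).toReal := by rw [measure_inter_conull hAnull]
      _ = (P ({ω | U ω ≤ t} ∩ A)).toReal := by rw [hset]
      _ = (P {ω | U ω ≤ t}).toReal := by rw [measure_inter_conull hAnull]
      _ = t := hUunif t htmem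
  exact Filter.Eventually.of_forall hmain
end

section
/- Let σ be a distortion, τ_σ(p) := ∫₀^p σ(u) du, and τ_σ⁻¹(u) := inf{p ∈ [0,1] : τ_σ(p) ≥ u}. Let L be a real random variable and U a uniformly distributed random variable on the same probability space with L = F_L⁻¹(U) almost surely, and set L_σ := F_L⁻¹(τ_σ⁻¹(U)). Then τ_σ(u) ≤ u for all u ∈ [0,1], L_σ ≥ L almost surely, and P(L_σ ≤ y) ≤ F_L(y) for every y ∈ ℝ; that is, L_σ stochastically dominates L in first order. -/
open MeasureTheory Set Filter
open scoped ENNReal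

lemma tau_le_aux (σ : ℝ → ℝ)
    (hσ_mono : MonotoneOn σ (Icc (0:ℝ) 1)) (hσ_int : ∫ u in (0:ℝ)..1, σ u = 1) :
    ∀ u ∈ Icc (0:ℝ) 1, tauSigma σ u ≤ u := by
  rintro u ⟨hu0, hu1⟩
  have hmem : u ∈ Icc (0:ℝ) 1 := ⟨hu0, hu1⟩
  have hi1 : IntervalIntegrable σ volume 0 u :=
    (hσ_mono.mono (by rw [uIcc_of_le hu0]; exact Icc_subset_Icc le_rfl hu1)).intervalIntegrable
  have hi2 : IntervalIntegrable σ volume u 1 :=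
    (hσ_mono.mono (by rw [uIcc_of_le hu1]; exact Icc_subset_Icc hu0 le_rfl)).intervalIntegrable
  have h1 : tauSigma σ u ≤ u * σ u := by
    have := intervalIntegral.integral_mono_on hu0 hi1 intervalIntegrable_const
      (fun t ht => hσ_mono ⟨ht.1, le_trans ht.2 hu1⟩ hmem ht.2)
    simpa [tauSigma] using this
  have h2 : (1 - u) * σ u ≤ ∫ t in u..1, σ t := by
    have := intervalIntegral.integral_mono_on hu1 intervalIntegrable_const hi2
      (fun t ht => hσ_mono hmem ⟨le_trans hu0 ht.1, ht.2⟩ ht.1)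
    simpa using this
  have h3 : tauSigma σ u + ∫ t in u..1, σ t = 1 := by
    rw [tauSigma, intervalIntegral.integral_add_adjacent_intervals hi1 hi2, hσ_int]
  nlinarith [h1, h2, h3]

lemma quantile_mono_aux {Ω : Type*} [MeasurableSpace Ω] (P : Measure Ω) [IsProbabilityMeasure P]
    (L : Ω → ℝ) (hL : Measurable L) {u v : ℝ} (hu : 0 < u) (huv : u ≤ v) (hv : v < 1) :
    quantileRV P L u ≤ quantileRV P L v := by
  have hcdf_mono : Monotone (cdfRV P L) := fun a b hab =>
    ENNReal.toReal_mono (measure_ne_top P _) (measure_mono fun ω h => le_trans h hab)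
  -- nonempty of the v-set
  have hne : ∃ x, v ≤ cdfRV P L x := by
    have hmap : ∀ x : ℝ, P {ω | L ω ≤ x} = (P.map L) (Iic x) := by
      intro x
      rw [Measure.map_apply hL measurableSet_Iic]; rfl
    haveI : IsProbabilityMeasure (P.map L) := Measure.isProbabilityMeasure_map hL.aemeasurable
    have ht : Tendsto (fun x : ℝ => ((P.map L) (Iic x)).toReal) atTop (nhds 1) := by
      have := tendsto_measure_Iic_atTop (P.map L)
      rw [measure_univ] at this
      have h2 := (ENNReal.tendsto_toReal (by norm_num)).comp this
      simpa [Function.comp_def] using h2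
    have := (ht.eventually (eventually_gt_nhds hv)).exists
    obtain ⟨x, hx⟩ := this
    exact ⟨x, by rw [cdfRV, hmap]; exact hx.le⟩
  -- bddBelow of the u-set
  have hbdd : BddBelow {x : ℝ | u ≤ cdfRV P L x} := by
    have hmap : ∀ x : ℝ, P {ω | L ω ≤ x} = (P.map L) (Iic x) := by
      intro x
      rw [Measure.map_apply hL measurableSet_Iic]; rfl
    have hz : Tendsto (fun n : ℕ => ((P.map L) (Iic (-(n:ℝ)))).toReal) atTop (nhds 0) := by
      have hs : Tendsto (fun n : ℕ => (P.map L) (Iic (-(n:ℝ)))) atTop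
          (nhds ((P.map L) (⋂ n : ℕ, Iic (-(n:ℝ))))) := by
        apply tendsto_measure_iInter_atTop
        · exact fun n => measurableSet_Iic.nullMeasurableSet
        · intro a b hab
          exact Iic_subset_Iic.2 (by exact_mod_cast neg_le_neg (Nat.cast_le.2 hab))
        · exact ⟨0, measure_ne_top _ _⟩
      have hempty : (⋂ n : ℕ, Iic (-(n:ℝ))) = ∅ := by
        ext x
        simp only [mem_iInter, mem_Iic, mem_empty_iff_false, iff_false, not_forall, not_le]
        obtain ⟨n, hn⟩ := exists_nat_gt (-x)
        exact ⟨n, by linarith⟩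
      rw [hempty, measure_empty] at hs
      have h2 := (ENNReal.tendsto_toReal (by norm_num)).comp hs
      simpa [Function.comp_def] using h2
    obtain ⟨n, hn⟩ := (hz.eventually (eventually_lt_nhds hu)).exists
    refine ⟨-(n:ℝ), fun x hx => ?_⟩
    by_contra hc
    push_neg at hc
    have h3 : cdfRV P L x ≤ cdfRV P L (-(n:ℝ)) := hcdf_mono hc.le
    have hn' : cdfRV P L (-(n:ℝ)) < u := by rw [cdfRV, hmap]; exact hn
    have hx2 : u ≤ cdfRV P L x := hx
    linarith
  exact csInf_le_csInf hbdd (let ⟨x, hx⟩ := hne; ⟨x, hx⟩)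
    (fun x hx => le_trans huv hx)

/-- if `L = F_L⁻¹(U)` a.s. and `L_σ = F_L⁻¹(τ_σ⁻¹(U))`, then `τ_σ(u) ≤ u` on
`[0,1]`, `L_σ ≥ L` almost surely, and `F_{L_σ}(y) ≤ F_L(y)` for every `y`; in other words,
`L_σ` stochastically dominates `L` in first order. -/
theorem statement_2 {Ω : Type*} [MeasurableSpace Ω] (P : Measure Ω) [IsProbabilityMeasure P]
    (L : Ω → ℝ) (hL : Measurable L)
    (σ : ℝ → ℝ)
    (hσ_nonneg : ∀ u ∈ Icc (0:ℝ) 1, 0 ≤ σ u)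
    (hσ_mono : MonotoneOn σ (Icc (0:ℝ) 1))
    (hσ_int : ∫ u in (0:ℝ)..1, σ u = 1)
    (U : Ω → ℝ) (hU : Measurable U) (hUunif : IsUniformRV P U)
    (hcoup : ∀ᵐ ω ∂P, L ω = quantileRV P L (U ω))
    (Lσ : Ω → ℝ) (hLσ : Lσ = fun ω => quantileRV P L (tauSigmaInv σ (U ω))) :
    (∀ u ∈ Icc (0:ℝ) 1, tauSigma σ u ≤ u) ∧
      (∀ᵐ ω ∂P, L ω ≤ Lσ ω) ∧
      (∀ y : ℝ, (P {ω | Lσ ω ≤ y}).toReal ≤ cdfRV P L y) := by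
  have htau : ∀ u ∈ Icc (0:ℝ) 1, tauSigma σ u ≤ u := tau_le_aux σ hσ_mono hσ_int
  have htau1 : tauSigma σ 1 = 1 := hσ_int
  have hσ1 : (1:ℝ) ≤ σ 1 := by
    have hi : IntervalIntegrable σ volume 0 1 :=
      (hσ_mono.mono (by rw [uIcc_of_le zero_le_one])).intervalIntegrable
    have := intervalIntegral.integral_mono_on zero_le_one hi intervalIntegrable_const
      (fun t ht => hσ_mono ht (right_mem_Icc.2 zero_le_one) ht.2)
    rw [hσ_int] at this; simpa using this
  have hbddS : ∀ u : ℝ, BddBelow {p : ℝ | p ∈ Icc (0:ℝ) 1 ∧ u ≤ tauSigma σ p} :=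
    fun u => ⟨0, fun p hp => hp.1.1⟩
  have h1mem : ∀ u : ℝ, u ≤ 1 → (1:ℝ) ∈ {p : ℝ | p ∈ Icc (0:ℝ) 1 ∧ u ≤ tauSigma σ p} :=
    fun u hu => ⟨right_mem_Icc.2 zero_le_one, by rw [htau1]; exact hu⟩
  have hlow : ∀ u : ℝ, u ≤ 1 → u ≤ tauSigmaInv σ u := fun u hu =>
    le_csInf ⟨1, h1mem u hu⟩ (fun p hp => le_trans hp.2 (htau p hp.1))
  have hinv1 : tauSigmaInv σ 1 = 1 :=
    le_antisymm (csInf_le (hbddS 1) (h1mem 1 le_rfl)) (hlow 1 le_rfl)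
  have hlt1 : ∀ u : ℝ, 0 < u → u < 1 → tauSigmaInv σ u < 1 := by
    intro u hu0 hu
    obtain ⟨p, hp⟩ : ∃ p : ℝ, p = 1 - (1 - u) / σ 1 := ⟨_, rfl⟩
    have hσ1pos : 0 < σ 1 := by linarith
    have hple : p < 1 := by
      have : 0 < (1 - u) / σ 1 := div_pos (by linarith) hσ1pos
      linarith
    have hp0 : 0 ≤ p := by
      have : (1 - u) / σ 1 ≤ 1 := (div_le_one hσ1pos).2 (by linarith)
      linarith
    have hi1 : IntervalIntegrable σ volume 0 p :=
      (hσ_mono.mono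
        (by rw [uIcc_of_le hp0]; exact Icc_subset_Icc le_rfl hple.le)).intervalIntegrable
    have hi2 : IntervalIntegrable σ volume p 1 :=
      (hσ_mono.mono
        (by rw [uIcc_of_le hple.le]; exact Icc_subset_Icc hp0 le_rfl)).intervalIntegrable
    have hub : ∫ t in p..1, σ t ≤ (1 - p) * σ 1 := by
      have := intervalIntegral.integral_mono_on hple.le hi2 intervalIntegrable_const
        (fun t ht => hσ_mono ⟨le_trans hp0 ht.1, ht.2⟩ (right_mem_Icc.2 zero_le_one) ht.2)
      simpa using this
    have hsum : tauSigma σ p + ∫ t in p..1, σ t = 1 := by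
      rw [tauSigma, intervalIntegral.integral_add_adjacent_intervals hi1 hi2, hσ_int]
    have hτp : u ≤ tauSigma σ p := by
      have h1p : (1 - p) * σ 1 = 1 - u := by
        rw [hp]; field_simp; ring
      nlinarith [hub, hsum]
    calc tauSigmaInv σ u ≤ p := csInf_le (hbddS u) ⟨⟨hp0, hple.le⟩, hτp⟩
      _ < 1 := hple
  have hU0 : ∀ᵐ ω ∂P, 0 < U ω := by
    have h0 : P {ω | U ω ≤ 0} = 0 := by
      have h := hUunif 0 ⟨le_rfl, zero_le_one⟩
      exact ((ENNReal.toReal_eq_zero_iff _).1 h).resolve_right (measure_ne_top P _)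
    have hae : ∀ᵐ ω ∂P, ¬ U ω ≤ 0 := by
      rw [ae_iff]; simpa using h0
    filter_upwards [hae] with ω h using not_le.1 h
  have hU1 : ∀ᵐ ω ∂P, U ω ≤ 1 := by
    have h1 : P {ω | U ω ≤ 1} = 1 := by
      have h := hUunif 1 ⟨zero_le_one, le_rfl⟩
      rwa [ENNReal.toReal_eq_one_iff] at h
    rw [ae_iff]
    have hset : {ω | ¬ U ω ≤ 1} = {ω | U ω ≤ 1}ᶜ := rfl
    have hms : MeasurableSet {ω | U ω ≤ 1} := hU measurableSet_Iic
    rw [hset, measure_compl hms (measure_ne_top P _), h1, measure_univ, tsub_self]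
  have hpart2 : ∀ᵐ ω ∂P, L ω ≤ Lσ ω := by
    filter_upwards [hcoup, hU0, hU1] with ω hc h0 h1
    rw [hLσ]
    dsimp only
    rcases eq_or_lt_of_le h1 with heq | hlt
    · have hiv : tauSigmaInv σ (U ω) = 1 := by rw [heq]; exact hinv1
      rw [hiv, ← heq, ← hc]
    · have h2 := hlow (U ω) h1
      have h3 := hlt1 (U ω) h0 hlt
      rw [hc]
      exact quantile_mono_aux P L hL h0 h2 h3
  refine ⟨htau, hpart2, fun y => ?_⟩
  have hmono : P {ω | Lσ ω ≤ y} ≤ P {ω | L ω ≤ y} := by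
    apply measure_mono_ae
    filter_upwards [hpart2] with ω h hy
    exact le_trans h hy
  exact ENNReal.toReal_mono (measure_ne_top P _) hmono
end

section
/- Let σ ∈ L^q([0,1]) be a distortion and L ∈ L^p a real random variable for conjugate exponents p, q. Let U be uniformly distributed on the same probability space, τ_σ(p) := ∫₀^p σ(u) du with generalized inverse τ_σ⁻¹, and L_σ := F_L⁻¹(τ_σ⁻¹(U)). Then E[L_σ] = ∫₀¹ F_L⁻¹(τ_σ⁻¹(u)) du = ∫₀¹ F_L⁻¹(u) σ(u) du = π_σ(L). -/
open MeasureTheory Set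
open scoped ENNReal

/-- The σ-distorted premium `π_σ(L) = ∫₀¹ F_L⁻¹(u) σ(u) du`. -/
noncomputable def distortedPremium {Ω : Type*} [MeasurableSpace Ω] (P : Measure Ω)
    (L : Ω → ℝ) (σ : ℝ → ℝ) : ℝ :=
  ∫ u in (0:ℝ)..1, quantileRV P L u * σ u

/-- for conjugate exponents `p, q`, a distortion `σ ∈ L^q` and `L ∈ L^p`,
the distorted loss `L_σ = F_L⁻¹(τ_σ⁻¹(U))` satisfies
`E[L_σ] = ∫₀¹ F_L⁻¹(τ_σ⁻¹(u)) du = ∫₀¹ F_L⁻¹(u) σ(u) du = π_σ(L)`. -/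
theorem statement_3 {Ω : Type*} [MeasurableSpace Ω] (P : Measure Ω) [IsProbabilityMeasure P]
    (L : Ω → ℝ) (hL : Measurable L)
    (σ : ℝ → ℝ)
    (hσ_nonneg : ∀ u ∈ Icc (0:ℝ) 1, 0 ≤ σ u)
    (hσ_mono : MonotoneOn σ (Icc (0:ℝ) 1))
    (hσ_int : ∫ u in (0:ℝ)..1, σ u = 1)
    (p q : ℝ≥0∞) (hpq : 1 / p + 1 / q = 1)
    (hLp : MemLp L p P)
    (hσq : MemLp σ q (volume.restrict (Icc (0:ℝ) 1)))
    (U : Ω → ℝ) (hU : Measurable U) (hUunif : IsUniformRV P U)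
    (Lσ : Ω → ℝ) (hLσ : Lσ = fun ω => quantileRV P L (tauSigmaInv σ (U ω))) :
    (∫ ω, Lσ ω ∂P) = (∫ u in (0:ℝ)..1, quantileRV P L (tauSigmaInv σ u)) ∧
      (∫ u in (0:ℝ)..1, quantileRV P L (tauSigmaInv σ u)) =
        (∫ u in (0:ℝ)..1, quantileRV P L u * σ u) ∧
      (∫ u in (0:ℝ)..1, quantileRV P L u * σ u) = distortedPremium P L σ := by
  classical
  set T : ℝ → ℝ := tauSigma σ with hT_def
  set Ti : ℝ → ℝ := tauSigmaInv σ with hTi_def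
  set h : ℝ → ℝ := quantileRV P L with hh_def
  set B : Measure ℝ := volume.restrict (Ioc (0:ℝ) 1) with hB_def
  -- basic integrability of σ
  have hσ_intOn : IntegrableOn σ (Icc (0:ℝ) 1) volume :=
    hσ_mono.integrableOn_isCompact isCompact_Icc
  have hII : ∀ a b : ℝ, a ∈ Icc (0:ℝ) 1 → b ∈ Icc (0:ℝ) 1 →
      IntervalIntegrable σ volume a b := by
    intro a b ha hb
    apply (hσ_intOn.mono_set ?_).intervalIntegrable
    rw [uIcc_eq_union]
    exact union_subset (Icc_subset_Icc ha.1 hb.2) (Icc_subset_Icc hb.1 ha.2)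
  -- T is continuous and monotone on [0,1], with T 0 = 0, T 1 = 1
  have hT_cont : ContinuousOn T (Icc (0:ℝ) 1) := by
    have := intervalIntegral.continuousOn_primitive_interval
      (f := σ) (μ := volume) (a := (0:ℝ)) (b := 1) (by
        rw [uIcc_of_le (zero_le_one)]; exact hσ_intOn)
    rwa [uIcc_of_le (zero_le_one : (0:ℝ) ≤ 1)] at this
  have hT0 : T 0 = 0 := intervalIntegral.integral_same
  have hT1 : T 1 = 1 := hσ_int
  have hT_mono : MonotoneOn T (Icc (0:ℝ) 1) := by
    intro a ha b hb hab
    have hsplit : T a + ∫ u in a..b, σ u = T b := by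
      simpa [hT_def, tauSigma] using
        intervalIntegral.integral_add_adjacent_intervals
          (hII 0 a ⟨le_rfl, zero_le_one⟩ ha) (hII a b ha hb)
    have hpos : 0 ≤ ∫ u in a..b, σ u :=
      intervalIntegral.integral_nonneg hab
        (fun u hu => hσ_nonneg u ⟨le_trans ha.1 hu.1, le_trans hu.2 hb.2⟩)
    linarith
  have hT_nonneg : ∀ v ∈ Icc (0:ℝ) 1, 0 ≤ T v := by
    intro v hv; rw [← hT0]; exact hT_mono ⟨le_rfl, zero_le_one⟩ hv hv.1
  have hT_le1 : ∀ v ∈ Icc (0:ℝ) 1, T v ≤ 1 := by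
    intro v hv; rw [← hT1]; exact hT_mono hv ⟨zero_le_one, le_rfl⟩ hv.2
  -- the sets defining Ti
  have hS_eq : ∀ u : ℝ, {p : ℝ | p ∈ Icc (0:ℝ) 1 ∧ u ≤ T p}
      = Icc (0:ℝ) 1 ∩ T ⁻¹' (Ici u) := by
    intro u; ext p; simp [mem_inter_iff, and_comm, mem_preimage]
  have hS_closed : ∀ u : ℝ, IsClosed {p : ℝ | p ∈ Icc (0:ℝ) 1 ∧ u ≤ T p} := by
    intro u
    rw [hS_eq]
    exact hT_cont.preimage_isClosed_of_isClosed isClosed_Icc isClosed_Ici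
  have hS_bdd : ∀ u : ℝ, BddBelow {p : ℝ | p ∈ Icc (0:ℝ) 1 ∧ u ≤ T p} :=
    fun u => ⟨0, fun p hp => hp.1.1⟩
  have hS_ne : ∀ u : ℝ, u ≤ 1 → {p : ℝ | p ∈ Icc (0:ℝ) 1 ∧ u ≤ T p}.Nonempty := by
    intro u hu
    exact ⟨1, ⟨zero_le_one, le_rfl⟩, by rw [hT1]; exact hu⟩
  have hTi_mem : ∀ u : ℝ, u ≤ 1 → Ti u ∈ {p : ℝ | p ∈ Icc (0:ℝ) 1 ∧ u ≤ T p} := by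
    intro u hu
    exact (hS_closed u).csInf_mem (hS_ne u hu) (hS_bdd u)
  have hTi_le : ∀ u v : ℝ, v ∈ Icc (0:ℝ) 1 → u ≤ T v → Ti u ≤ v := by
    intro u v hv huv
    exact csInf_le (hS_bdd u) ⟨hv, huv⟩
  -- Galois connection on [0,1]
  have hGalois : ∀ u v : ℝ, u ≤ 1 → v ∈ Icc (0:ℝ) 1 → (Ti u ≤ v ↔ u ≤ T v) := by
    intro u v hu hv
    constructor
    · intro hle
      exact le_trans (hTi_mem u hu).2 (hT_mono (hTi_mem u hu).1 hv hle)
    · intro hle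
      exact hTi_le u v hv hle
  have hTi_mono : MonotoneOn Ti (Iic (1:ℝ)) := by
    intro u₁ _ u₂ hu₂ h12
    exact csInf_le_csInf (hS_bdd u₁) (hS_ne u₂ hu₂)
      (fun p hp => ⟨hp.1, le_trans h12 hp.2⟩)
  have hTi_aemeas : AEMeasurable Ti B := by
    have h1 : AEMeasurable Ti (volume.restrict (Iic (1:ℝ))) :=
      aemeasurable_restrict_of_monotoneOn measurableSet_Iic hTi_mono
    exact h1.mono_measure (Measure.restrict_mono Ioc_subset_Iic_self le_rfl)
  -- the pushforward of B under Ti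
  set ν : Measure ℝ := Measure.map Ti B with hν_def
  haveI hνfin : IsFiniteMeasure ν := by
    constructor
    rw [hν_def, Measure.map_apply_of_aemeasurable hTi_aemeas MeasurableSet.univ,
      preimage_univ]
    exact measure_lt_top _ _
  -- measurable version of σ
  have hσ_aemB : AEMeasurable σ B := by
    have := aemeasurable_restrict_of_monotoneOn measurableSet_Icc hσ_mono (μ := volume)
    exact this.mono_measure (Measure.restrict_mono Ioc_subset_Icc_self le_rfl)
  set σ' : ℝ → ℝ := hσ_aemB.mk σ with hσ'_def
  have hσ'_meas : Measurable σ' := hσ_aemB.measurable_mk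
  have hσ'_ae : σ =ᵐ[B] σ' := hσ_aemB.ae_eq_mk
  -- value of the density integral
  have hkey : ∀ v ∈ Icc (0:ℝ) 1,
      (∫⁻ u in Ioc (0:ℝ) v, ENNReal.ofReal (σ' u) ∂volume) = ENNReal.ofReal (T v) := by
    intro v hv
    have hsub : Ioc (0:ℝ) v ⊆ Ioc (0:ℝ) 1 := Ioc_subset_Ioc_right hv.2
    have hae : σ =ᵐ[volume.restrict (Ioc (0:ℝ) v)] σ' :=
      ae_restrict_of_ae_restrict_of_subset hsub hσ'_ae
    have hae2 : (fun u => ENNReal.ofReal (σ' u))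
        =ᵐ[volume.restrict (Ioc (0:ℝ) v)] (fun u => ENNReal.ofReal (σ u)) :=
      hae.symm.mono fun u hu => by simp only [hu]
    rw [lintegral_congr_ae hae2]
    rw [← ofReal_integral_eq_lintegral_ofReal
      (hσ_intOn.mono_set (Ioc_subset_Icc_self.trans (Icc_subset_Icc le_rfl hv.2)))
      ((ae_restrict_iff' measurableSet_Ioc).2 (ae_of_all _
        (fun u hu => hσ_nonneg u ⟨hu.1.le, hu.2.trans hv.2⟩)))]
    congr 1
    rw [hT_def, tauSigma, intervalIntegral.integral_of_le hv.1]
  -- ν equals the density measure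
  set d : ℝ → ℝ≥0∞ := fun u => ENNReal.ofReal (σ' u) with hd_def
  set m : Measure ℝ := B.withDensity d with hm_def
  have hνm : ν = m := by
    apply MeasureTheory.Measure.ext_of_Iic
    intro v
    have hν_apply : ν (Iic v) = volume ({u | Ti u ≤ v} ∩ Ioc (0:ℝ) 1) := by
      rw [hν_def, Measure.map_apply_of_aemeasurable hTi_aemeas measurableSet_Iic,
        hB_def, Measure.restrict_apply' measurableSet_Ioc]
      rfl
    have hm_apply : m (Iic v) = ∫⁻ u in Iic v ∩ Ioc (0:ℝ) 1, d u ∂volume := by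
      rw [hm_def, withDensity_apply d measurableSet_Iic, hB_def,
        Measure.restrict_restrict measurableSet_Iic]
    rcases lt_or_ge v 0 with hv | hv0
    · have h1 : {u : ℝ | Ti u ≤ v} ∩ Ioc (0:ℝ) 1 = ∅ := by
        apply eq_empty_iff_forall_notMem.2
        rintro u ⟨hTiu, hu⟩
        rw [mem_setOf_eq] at hTiu
        rw [mem_Ioc] at hu
        have h01 := (hTi_mem u hu.2).1.1
        linarith
      have h2 : Iic v ∩ Ioc (0:ℝ) 1 = ∅ := by
        apply eq_empty_iff_forall_notMem.2
        rintro u ⟨huv, hu⟩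
        rw [mem_Iic] at huv
        rw [mem_Ioc] at hu
        linarith [hu.1]
      rw [hν_apply, hm_apply, h1, h2]
      simp
    rcases le_or_gt v 1 with hv1 | hv1
    · -- 0 ≤ v ≤ 1
      have h1 : {u : ℝ | Ti u ≤ v} ∩ Ioc (0:ℝ) 1 = Ioc (0:ℝ) (T v) := by
        ext u
        simp only [mem_inter_iff, mem_setOf_eq, mem_Ioc]
        constructor
        · rintro ⟨hTiu, hu0, hu1⟩
          exact ⟨hu0, (hGalois u v hu1 ⟨hv0, hv1⟩).1 hTiu⟩
        · rintro ⟨hu0, huT⟩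
          have hu1 : u ≤ 1 := le_trans huT (hT_le1 v ⟨hv0, hv1⟩)
          exact ⟨(hGalois u v hu1 ⟨hv0, hv1⟩).2 huT, hu0, hu1⟩
      have h2 : Iic v ∩ Ioc (0:ℝ) 1 = Ioc (0:ℝ) v := by
        ext u
        simp only [mem_inter_iff, mem_Iic, mem_Ioc]
        exact ⟨fun ⟨a, b, _⟩ => ⟨b, a⟩, fun ⟨a, b⟩ => ⟨b, a, le_trans b hv1⟩⟩
      rw [hν_apply, hm_apply, h1, h2, hkey v ⟨hv0, hv1⟩, Real.volume_Ioc, sub_zero]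
    · -- v > 1
      have h1 : {u : ℝ | Ti u ≤ v} ∩ Ioc (0:ℝ) 1 = Ioc (0:ℝ) 1 := by
        ext u
        simp only [mem_inter_iff, mem_setOf_eq, mem_Ioc, and_iff_right_iff_imp]
        intro hu
        exact le_trans (hTi_mem u hu.2).1.2 hv1.le
      have h2 : Iic v ∩ Ioc (0:ℝ) 1 = Ioc (0:ℝ) 1 := by
        ext u
        simp only [mem_inter_iff, mem_Iic, mem_Ioc, and_iff_right_iff_imp]
        intro hu
        exact le_trans hu.2 hv1.le
      rw [hν_apply, hm_apply, h1, h2, hkey 1 ⟨zero_le_one, le_rfl⟩, hT1,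
        Real.volume_Ioc, sub_zero]
  -- cdf facts
  set μL : Measure ℝ := Measure.map L P with hμL_def
  haveI : IsProbabilityMeasure μL := Measure.isProbabilityMeasure_map hL.aemeasurable
  have hcdf_eq : ∀ x, cdfRV P L x = ProbabilityTheory.cdf μL x := by
    intro x
    rw [ProbabilityTheory.cdf_eq_real, cdfRV, hμL_def, measureReal_def,
      Measure.map_apply hL measurableSet_Iic]
    rfl
  have hcdf_mono : Monotone (cdfRV P L) := by
    intro a b hab
    rw [hcdf_eq, hcdf_eq]
    exact ProbabilityTheory.monotone_cdf μL hab
  have hcdf_fun : cdfRV P L = fun x => ProbabilityTheory.cdf μL x := funext hcdf_eq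
  have hcdf_top : Filter.Tendsto (cdfRV P L) Filter.atTop (nhds 1) := by
    rw [hcdf_fun]; exact ProbabilityTheory.tendsto_cdf_atTop μL
  have hcdf_bot : Filter.Tendsto (cdfRV P L) Filter.atBot (nhds 0) := by
    rw [hcdf_fun]; exact ProbabilityTheory.tendsto_cdf_atBot μL
  -- quantile facts
  have hQne : ∀ u : ℝ, u < 1 → {x : ℝ | u ≤ cdfRV P L x}.Nonempty := by
    intro u hu
    obtain ⟨x, hx⟩ := (hcdf_top.eventually (eventually_ge_nhds hu)).exists
    exact ⟨x, hx⟩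
  have hQbdd : ∀ u : ℝ, 0 < u → BddBelow {x : ℝ | u ≤ cdfRV P L x} := by
    intro u hu
    obtain ⟨x₀, hx₀⟩ := (hcdf_bot.eventually (eventually_lt_nhds hu)).exists
    refine ⟨x₀, fun x hx => ?_⟩
    by_contra hc
    push_neg at hc
    exact absurd (le_trans hx (hcdf_mono hc.le)) (not_le.2 hx₀)
  have hQmono : MonotoneOn h (Ioo (0:ℝ) 1) := by
    intro u₁ h₁ u₂ h₂ h12
    exact csInf_le_csInf (hQbdd u₁ h₁.1) (hQne u₂ h₂.2)
      (fun x hx => le_trans h12 hx)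
  -- measurability of h w.r.t. ν
  have hBIoo : B = volume.restrict (Ioo (0:ℝ) 1) :=
    (Measure.restrict_congr_set (Ioo_ae_eq_Ioc (μ := volume) (a := (0:ℝ)) (b := 1))).symm
  have hh_aemeasB : AEMeasurable h (volume.restrict (Ioo (0:ℝ) 1)) :=
    aemeasurable_restrict_of_monotoneOn measurableSet_Ioo hQmono
  have hh_aemeasν : AEMeasurable h ν := by
    rw [hνm, hm_def, hBIoo]
    exact hh_aemeasB.mono_ac (withDensity_absolutelyContinuous _ _)
  have hh_smν : AEStronglyMeasurable h ν := hh_aemeasν.aestronglyMeasurable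
  -- pushforward of P under U is B
  haveI : IsProbabilityMeasure (Measure.map U P) := Measure.isProbabilityMeasure_map hU.aemeasurable
  have hPU1 : P {ω | U ω ≤ (1:ℝ)} = 1 := by
    have := hUunif 1 ⟨zero_le_one, le_rfl⟩
    rw [← ENNReal.ofReal_toReal (measure_ne_top P _), this]
    simp
  have hmapU : Measure.map U P = B := by
    apply MeasureTheory.Measure.ext_of_Iic
    intro v
    have hmap_apply : Measure.map U P (Iic v) = P {ω | U ω ≤ v} := by
      rw [Measure.map_apply hU measurableSet_Iic]
      rfl
    have hB_apply : B (Iic v) = volume (Iic v ∩ Ioc (0:ℝ) 1) := by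
      rw [hB_def, Measure.restrict_apply' measurableSet_Ioc]
    rcases lt_or_ge v 0 with hv | hv0
    · have h0 : P {ω | U ω ≤ (0:ℝ)} = 0 := by
        have h1 := hUunif 0 ⟨le_rfl, zero_le_one⟩
        have h2 := measure_ne_top P {ω | U ω ≤ (0:ℝ)}
        rcases (ENNReal.toReal_eq_zero_iff _).1 h1 with h | h
        · exact h
        · exact absurd h h2
      have h1 : P {ω | U ω ≤ v} = 0 :=
        measure_mono_null (fun ω hω => le_trans hω hv.le) h0
      have h2 : Iic v ∩ Ioc (0:ℝ) 1 = ∅ := by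
        apply eq_empty_iff_forall_notMem.2
        rintro u ⟨huv, hu⟩
        rw [mem_Iic] at huv
        rw [mem_Ioc] at hu
        linarith [hu.1]
      rw [hmap_apply, hB_apply, h1, h2]
      simp
    rcases le_or_gt v 1 with hv1 | hv1
    · have h1 : P {ω | U ω ≤ v} = ENNReal.ofReal v := by
        conv_rhs => rw [← hUunif v ⟨hv0, hv1⟩]
        exact (ENNReal.ofReal_toReal (measure_ne_top P _)).symm
      have h2 : Iic v ∩ Ioc (0:ℝ) 1 = Ioc (0:ℝ) v := by
        ext u
        simp only [mem_inter_iff, mem_Iic, mem_Ioc]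
        exact ⟨fun ⟨a, b, _⟩ => ⟨b, a⟩, fun ⟨a, b⟩ => ⟨b, a, le_trans b hv1⟩⟩
      rw [hmap_apply, hB_apply, h1, h2, Real.volume_Ioc, sub_zero]
    · have h1 : P {ω | U ω ≤ v} = 1 := by
        refine le_antisymm prob_le_one ?_
        rw [← hPU1]
        exact measure_mono (fun ω hω => le_trans hω hv1.le)
      have h2 : Iic v ∩ Ioc (0:ℝ) 1 = Ioc (0:ℝ) 1 := by
        ext u
        simp only [mem_inter_iff, mem_Iic, mem_Ioc, and_iff_right_iff_imp]
        intro hu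
        exact le_trans hu.2 hv1.le
      rw [hmap_apply, hB_apply, h1, h2, Real.volume_Ioc, sub_zero]
      simp
  -- measurability of h ∘ Ti w.r.t. B
  have hcomp_sm : AEStronglyMeasurable (fun u => h (Ti u)) B := by
    have := hh_smν.comp_aemeasurable (μ := B) hTi_aemeas
    exact this
  -- FIRST EQUALITY
  have heq1 : (∫ ω, Lσ ω ∂P) = ∫ u in (0:ℝ)..1, h (Ti u) := by
    rw [hLσ]
    have h1 : (∫ ω, h (Ti (U ω)) ∂P) = ∫ u, h (Ti u) ∂(Measure.map U P) := by
      rw [integral_map hU.aemeasurable (by rw [hmapU]; exact hcomp_sm)]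
    rw [h1, hmapU, hB_def, intervalIntegral.integral_of_le zero_le_one]
  -- SECOND EQUALITY
  have heq2 : (∫ u in (0:ℝ)..1, h (Ti u)) = ∫ u in (0:ℝ)..1, h u * σ u := by
    have hstep1 : (∫ u in (0:ℝ)..1, h (Ti u)) = ∫ u, h (Ti u) ∂B := by
      rw [hB_def, intervalIntegral.integral_of_le zero_le_one]
    have hstep2 : (∫ u, h (Ti u) ∂B) = ∫ u, h u ∂ν := by
      rw [hν_def, integral_map hTi_aemeas hh_smν]
    have hd_eq : d = fun u => ((σ' u).toNNReal : ℝ≥0∞) := by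
      funext u
      rfl
    have hstep3 : (∫ u, h u ∂ν) = ∫ u, (σ' u).toNNReal • h u ∂B := by
      rw [hνm, hm_def, hd_eq]
      exact integral_withDensity_eq_integral_smul₀
        (hσ'_meas.real_toNNReal.aemeasurable) h
    have hstep4 : (∫ u, (σ' u).toNNReal • h u ∂B) = ∫ u, h u * σ u ∂B := by
      apply integral_congr_ae
      have h1 : ∀ᵐ u ∂B, u ∈ Ioc (0:ℝ) 1 := by
        rw [hB_def]
        exact ae_restrict_mem measurableSet_Ioc
      filter_upwards [h1, hσ'_ae] with u hu hσu
      have hnn : 0 ≤ σ u := hσ_nonneg u ⟨hu.1.le, hu.2⟩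
      rw [← hσu, NNReal.smul_def, smul_eq_mul, Real.coe_toNNReal _ hnn, mul_comm]
    have hstep5 : (∫ u, h u * σ u ∂B) = ∫ u in (0:ℝ)..1, h u * σ u := by
      rw [hB_def, intervalIntegral.integral_of_le zero_le_one]
    rw [hstep1, hstep2, hstep3, hstep4, hstep5]
  exact ⟨heq1, heq2, rfl⟩
end

section
/- Let σ be a bounded, right-continuous distortion. Then the measure μ_σ on [0,1] defined by μ_σ(A) := σ(0)·δ₀(A) + ∫_A (1−α) dσ(α) is a probability measure, and its cumulative distribution function satisfies μ_σ([0,p]) = (1−p)σ(p) + ∫₀^p σ(α) dα for all p ∈ [0,1]. -/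
open MeasureTheory Set
open scoped ENNReal

noncomputable def muSigma (f : StieltjesFunction ℝ) : Measure ℝ :=
  (ENNReal.ofReal (f 0)) • Measure.dirac 0 +
    (f.measure.restrict (Icc (0:ℝ) 1)).withDensity (fun α => ENNReal.ofReal (1 - α))

lemma leftLim_zero_eq (f : StieltjesFunction ℝ) (h_left : ∀ x : ℝ, x ≤ 0 → f x = f 0) :
    Function.leftLim f 0 = f 0 := by
  refine le_antisymm (f.mono.leftLim_le le_rfl) ?_
  have := f.mono.le_leftLim (show (-1:ℝ) < 0 by norm_num)
  rwa [h_left (-1) (by norm_num)] at this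

lemma key_lintegral (f : StieltjesFunction ℝ) (h_left : ∀ x : ℝ, x ≤ 0 → f x = f 0)
    {p : ℝ} (hp0 : 0 ≤ p) :
    ∫⁻ α in Icc (0:ℝ) p, ENNReal.ofReal (p - α) ∂f.measure
      = ENNReal.ofReal ((∫ t in (0:ℝ)..p, f t) - p * f 0) := by
  have hL0 := leftLim_zero_eq f h_left
  have step1 : ∀ α ∈ Icc (0:ℝ) p,
      ENNReal.ofReal (p - α)
        = ∫⁻ t in Ioc (0:ℝ) p, (if α < t then (1:ℝ≥0∞) else 0) ∂volume := by
    intro α hα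
    have : (fun t => if α < t then (1:ℝ≥0∞) else 0) = (Ioi α).indicator (fun _ => 1) := by
      ext t; simp [Set.indicator_apply, mem_Ioi]
    rw [this, lintegral_indicator measurableSet_Ioi, setLIntegral_const, one_mul,
      Measure.restrict_apply measurableSet_Ioi]
    have hset : Ioi α ∩ Ioc 0 p = Ioc α p := by
      ext t
      simp only [mem_inter_iff, mem_Ioi, mem_Ioc]
      constructor
      · rintro ⟨h1, _, h3⟩; exact ⟨h1, h3⟩
      · rintro ⟨h1, h2⟩; exact ⟨h1, lt_of_le_of_lt hα.1 h1, h2⟩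
    rw [hset, Real.volume_Ioc]
  rw [setLIntegral_congr_fun measurableSet_Icc step1]
  rw [lintegral_lintegral_swap]
  · have inner : ∀ t ∈ Ioc (0:ℝ) p,
        ∫⁻ α in Icc (0:ℝ) p, (if α < t then (1:ℝ≥0∞) else 0) ∂f.measure
          = ENNReal.ofReal (Function.leftLim f t - f 0) := by
      intro t ht
      have : (fun α => if α < t then (1:ℝ≥0∞) else 0) = (Iio t).indicator (fun _ => 1) := by
        ext α; simp [Set.indicator_apply, mem_Iio]
      rw [this, lintegral_indicator measurableSet_Iio, setLIntegral_const, one_mul,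
        Measure.restrict_apply measurableSet_Iio]
      have hset : Iio t ∩ Icc 0 p = Ico 0 t := by
        ext α
        simp only [mem_inter_iff, mem_Iio, mem_Icc, mem_Ico]
        constructor
        · rintro ⟨h1, h2, _⟩; exact ⟨h2, h1⟩
        · rintro ⟨h1, h2⟩; exact ⟨h2, h1, le_trans h2.le ht.2⟩
      rw [hset, f.measure_Ico, hL0]
    rw [setLIntegral_congr_fun measurableSet_Ioc inner]
    have hae : ∀ᵐ t ∂(volume.restrict (Ioc (0:ℝ) p)),
        ENNReal.ofReal (Function.leftLim f t - f 0) = ENNReal.ofReal (f t - f 0) := by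
      refine ae_restrict_of_ae ?_
      have hz : volume {x : ℝ | Function.leftLim f x ≠ f x} = 0 :=
        f.countable_leftLim_ne.measure_zero volume
      filter_upwards [measure_eq_zero_iff_ae_notMem.mp hz] with x hx
      simp only [mem_setOf_eq, not_not] at hx
      rw [hx]
    rw [lintegral_congr_ae hae]
    have h1 : IntegrableOn f (Ioc (0:ℝ) p) volume :=
      (f.mono.intervalIntegrable (a := 0) (b := p)).1
    have h2 : IntegrableOn (fun _ => f 0) (Ioc (0:ℝ) p) volume :=
      integrableOn_const (by simp)
    have hint : IntegrableOn (fun t => f t - f 0) (Ioc (0:ℝ) p) volume := h1.sub h2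
    have hnn : 0 ≤ᵐ[volume.restrict (Ioc (0:ℝ) p)] fun t => f t - f 0 := by
      refine (ae_restrict_iff' measurableSet_Ioc).mpr (Filter.Eventually.of_forall ?_)
      intro t ht
      simp only [Pi.zero_apply, sub_nonneg]
      exact f.mono ht.1.le
    rw [← ofReal_integral_eq_lintegral_ofReal hint hnn]
    congr 1
    rw [integral_sub h1 h2, setIntegral_const, Real.volume_real_Ioc,
      intervalIntegral.integral_of_le hp0,
      max_eq_left (by linarith), smul_eq_mul, sub_zero]
  · -- AEMeasurability for swap
    apply Measurable.aemeasurable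
    have : (Function.uncurry fun (α t : ℝ) => if α < t then (1:ℝ≥0∞) else 0)
        = {q : ℝ × ℝ | q.1 < q.2}.indicator (fun _ => 1) := by
      ext q; simp [Function.uncurry, Set.indicator_apply]
    rw [this]
    exact Measurable.indicator measurable_const (measurableSet_lt measurable_fst measurable_snd)

lemma muSigma_Icc_eq (f : StieltjesFunction ℝ)
    (h_left : ∀ x : ℝ, x ≤ 0 → f x = f 0) (h_nonneg : 0 ≤ f 0)
    {p : ℝ} (hp0 : 0 ≤ p) (hp1 : p ≤ 1) :
    muSigma f (Icc (0:ℝ) p)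
      = ENNReal.ofReal ((1 - p) * f p + ∫ α in (0:ℝ)..p, f α) := by
  have hL0 := leftLim_zero_eq f h_left
  have hfp0 : f 0 ≤ f p := f.mono hp0
  have hIntf : IntervalIntegrable f volume 0 p := f.mono.intervalIntegrable
  have hIntc : IntervalIntegrable (fun _ => f 0) volume 0 p := intervalIntegrable_const
  have hintle : p * f 0 ≤ ∫ α in (0:ℝ)..p, f α := by
    have := intervalIntegral.integral_mono_on hp0 hIntc hIntf (fun t ht => f.mono ht.1)
    simpa using this
  rw [muSigma, Measure.add_apply, Measure.smul_apply, smul_eq_mul,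
    Measure.dirac_apply_of_mem (show (0:ℝ) ∈ Icc (0:ℝ) p from ⟨le_refl 0, hp0⟩),
    withDensity_apply _ measurableSet_Icc, Measure.restrict_restrict measurableSet_Icc]
  have hinter : Icc (0:ℝ) p ∩ Icc (0:ℝ) 1 = Icc (0:ℝ) p := by
    rw [inter_eq_left]
    exact Icc_subset_Icc le_rfl hp1
  rw [hinter]
  have hsplit : ∫⁻ α in Icc (0:ℝ) p, ENNReal.ofReal (1 - α) ∂f.measure
      = ∫⁻ α in Icc (0:ℝ) p, (ENNReal.ofReal (1 - p) + ENNReal.ofReal (p - α)) ∂f.measure := by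
    refine setLIntegral_congr_fun measurableSet_Icc ?_
    intro α hα
    dsimp only
    rw [← ENNReal.ofReal_add (by linarith) (by linarith [hα.2])]
    ring_nf
  rw [hsplit, lintegral_add_left measurable_const, setLIntegral_const,
    key_lintegral f h_left hp0, f.measure_Icc, hL0]
  rw [← ENNReal.ofReal_mul (by linarith)]
  have hb : 0 ≤ (1 - p) * (f p - f 0) := mul_nonneg (by linarith) (by linarith)
  rw [mul_one, ← ENNReal.ofReal_add hb (by linarith),
    ← ENNReal.ofReal_add h_nonneg (by linarith)]
  congr 1
  ring

/-- for a bounded, right-continuous distortion `σ` (a Stieltjes function which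
is constant outside `[0,1]`, nonnegative, with `∫₀¹ σ = 1`), the measure
`μ_σ(A) = σ(0)·δ₀(A) + ∫_A (1−α) dσ(α)` is a probability measure whose cumulative
distribution function is `μ_σ([0,p]) = (1−p)σ(p) + ∫₀^p σ(α) dα` for all `p ∈ [0,1]`. -/
theorem statement_4 (f : StieltjesFunction ℝ)
    (h_left : ∀ x : ℝ, x ≤ 0 → f x = f 0)
    (h_right : ∀ x : ℝ, 1 ≤ x → f x = f 1)
    (h_nonneg : 0 ≤ f 0)
    (h_int : ∫ u in (0:ℝ)..1, f u = 1) :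
    IsProbabilityMeasure (muSigma f) ∧
      ∀ p ∈ Icc (0:ℝ) 1,
        ((muSigma f) (Icc (0:ℝ) p)).toReal = (1 - p) * f p + ∫ α in (0:ℝ)..p, f α := by
  constructor
  · constructor
    have huniv : muSigma f univ = muSigma f (Icc (0:ℝ) 1) := by
      rw [muSigma, Measure.add_apply, Measure.add_apply, Measure.smul_apply,
        Measure.smul_apply, Measure.dirac_apply_of_mem (mem_univ (0:ℝ)),
        Measure.dirac_apply_of_mem (show (0:ℝ) ∈ Icc (0:ℝ) 1 by simp),
        withDensity_apply _ MeasurableSet.univ, withDensity_apply _ measurableSet_Icc,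
        Measure.restrict_univ, Measure.restrict_restrict measurableSet_Icc, inter_self]
    rw [huniv, muSigma_Icc_eq f h_left h_nonneg zero_le_one le_rfl]
    · rw [h_int]; norm_num
  · intro p hp
    rw [muSigma_Icc_eq f h_left h_nonneg hp.1 hp.2]
    have hfp0 : f 0 ≤ f p := f.mono hp.1
    have hintle : p * f 0 ≤ ∫ α in (0:ℝ)..p, f α := by
      have := intervalIntegral.integral_mono_on hp.1
        (intervalIntegrable_const : IntervalIntegrable (fun _ => f 0) volume 0 p)
        f.mono.intervalIntegrable (fun t ht => f.mono ht.1)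
      simpa using this
    have hb : 0 ≤ (1 - p) * f p := mul_nonneg (by linarith [hp.2]) (by linarith)
    have hc : 0 ≤ p * f 0 := mul_nonneg hp.1 h_nonneg
    rw [ENNReal.toReal_ofReal (by linarith)]
end

section
/- Let σ be a bounded, right-continuous distortion and L an essentially bounded real random variable. Then the Kusuoka-type representation ∫_{[0,1]} CTE_α(L) μ_σ(dα) = π_σ(L) holds, where μ_σ(A) := σ(0)·δ₀(A) + ∫_A (1−α) dσ(α). -/
open MeasureTheory Set
open scoped ENNReal

/-- The conditional tail expectation `CTE_α(L) = (1−α)⁻¹ ∫_α¹ F_L⁻¹(p) dp`. -/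
noncomputable def CTE {Ω : Type*} [MeasurableSpace Ω] (P : Measure Ω) (L : Ω → ℝ)
    (α : ℝ) : ℝ :=
  (1 - α)⁻¹ * ∫ p in α..1, quantileRV P L p

/-- for a bounded, right-continuous distortion `σ` and an essentially bounded
random variable `L`, the Kusuoka-type representation `∫ CTE_α(L) μ_σ(dα) = π_σ(L)` holds. -/
theorem statement_5 {Ω : Type*} [MeasurableSpace Ω] (P : Measure Ω) [IsProbabilityMeasure P]
    (L : Ω → ℝ) (hL : Measurable L) (hLbdd : MemLp L ⊤ P)
    (f : StieltjesFunction ℝ)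
    (h_left : ∀ x : ℝ, x ≤ 0 → f x = f 0)
    (h_right : ∀ x : ℝ, 1 ≤ x → f x = f 1)
    (h_nonneg : 0 ≤ f 0)
    (h_int : ∫ u in (0:ℝ)..1, f u = 1) :
    ∫ α, CTE P L α ∂(muSigma f) = distortedPremium P L f := by
  classical
  set Q : ℝ → ℝ := quantileRV P L with hQdef
  -- a.e. bound on L
  obtain ⟨C, hC0, hae⟩ : ∃ C : ℝ, 0 ≤ C ∧ ∀ᵐ ω ∂P, |L ω| ≤ C := by
    refine ⟨(eLpNorm L ⊤ P).toReal, ENNReal.toReal_nonneg, ?_⟩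
    have h2 := hLbdd.2
    rw [eLpNorm_exponent_top] at h2
    filter_upwards [ae_le_eLpNormEssSup (f := L) (μ := P)] with ω hω
    rw [← Real.norm_eq_abs, eLpNorm_exponent_top]
    calc ‖L ω‖ = ((‖L ω‖₊ : ℝ≥0∞)).toReal := by simp
      _ ≤ (eLpNormEssSup L P).toReal := ENNReal.toReal_mono h2.ne hω
  -- cdf facts
  have hcdf_one : ∀ x : ℝ, C ≤ x → cdfRV P L x = 1 := by
    intro x hx
    have : {ω | L ω ≤ x} =ᵐ[P] (univ : Set Ω) := by
      rw [Filter.eventuallyEq_univ]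
      filter_upwards [hae] with ω h
      exact le_trans (le_trans (le_abs_self _) h) hx
    unfold cdfRV
    rw [measure_congr this, measure_univ, ENNReal.toReal_one]
  have hcdf_zero : ∀ x : ℝ, x < -C → cdfRV P L x = 0 := by
    intro x hx
    have : P {ω | L ω ≤ x} = 0 := by
      rw [measure_eq_zero_iff_ae_notMem]
      filter_upwards [hae] with ω h
      simp only [mem_setOf_eq, not_le]
      have : -C ≤ L ω := neg_le_of_abs_le h
      linarith
    unfold cdfRV; rw [this, ENNReal.toReal_zero]
  -- quantile facts on (0,1]
  have hSne : ∀ u : ℝ, u ≤ 1 → C ∈ {x : ℝ | u ≤ cdfRV P L x} := by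
    intro u hu
    simp only [mem_setOf_eq, hcdf_one C le_rfl]; exact hu
  have hSbdd : ∀ u : ℝ, 0 < u → ∀ x ∈ {x : ℝ | u ≤ cdfRV P L x}, -C ≤ x := by
    intro u hu x hx
    by_contra h
    push_neg at h
    have := hcdf_zero x h
    simp only [mem_setOf_eq, this] at hx
    linarith
  have hQ_le : ∀ u ∈ Ioc (0:ℝ) 1, Q u ≤ C := fun u hu =>
    csInf_le ⟨-C, fun x hx => hSbdd u hu.1 x hx⟩ (hSne u hu.2)
  have hQ_ge : ∀ u ∈ Ioc (0:ℝ) 1, -C ≤ Q u := fun u hu =>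
    le_csInf ⟨C, hSne u hu.2⟩ (fun x hx => hSbdd u hu.1 x hx)
  have hQ_mono : ∀ u v : ℝ, 0 < u → u ≤ v → v ≤ 1 → Q u ≤ Q v := by
    intro u v hu huv hv
    exact csInf_le_csInf ⟨-C, fun x hx => hSbdd u hu x hx⟩ ⟨C, hSne v hv⟩
      (fun x hx => le_trans huv hx)
  -- the trimmed quantile
  set Q' : ℝ → ℝ := fun u => if u ≤ 0 then -C else if 1 < u then C else Q u with hQ'def
  have hQ'eq : ∀ u ∈ Ioc (0:ℝ) 1, Q' u = Q u := by
    intro u hu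
    simp only [hQ'def, if_neg (not_le.2 hu.1), if_neg (not_lt.2 hu.2)]
  have hQ'mem : ∀ u : ℝ, Q' u ∈ Icc (-C) C := by
    intro u
    by_cases h1 : u ≤ 0
    · simp [hQ'def, h1, hC0, neg_le_self hC0]
    · by_cases h2 : 1 < u
      · simp [hQ'def, h1, h2, hC0, neg_le_self hC0]
      · push_neg at h1 h2
        simpa [hQ'def, not_le.2 h1, not_lt.2 h2] using
          ⟨hQ_ge u ⟨h1, h2⟩, hQ_le u ⟨h1, h2⟩⟩
  have hQ'mono : Monotone Q' := by
    intro u v huv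
    by_cases h1 : u ≤ 0
    · simp only [hQ'def, if_pos h1]
      exact (hQ'mem v).1
    · have hv1 : ¬ v ≤ 0 := fun h => h1 (le_trans huv h)
      by_cases h2 : 1 < v
      · simp only [hQ'def, if_neg h1, if_neg hv1, if_pos h2]
        split
        · exact le_refl C
        · next h => exact hQ_le u ⟨not_le.1 h1, not_lt.1 h⟩
      · have hu2 : ¬ 1 < u := fun h => h2 (h.trans_le huv)
        simp only [hQ'def, if_neg h1, if_neg hv1, if_neg h2, if_neg hu2]
        exact hQ_mono u v (not_le.1 h1) huv (not_lt.1 h2)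
  have hQ'meas : Measurable Q' := hQ'mono.measurable
  have hQ'bdd : ∀ u : ℝ, ‖Q' u‖ ≤ C := by
    intro u
    rw [Real.norm_eq_abs, abs_le]
    exact ⟨(hQ'mem u).1, (hQ'mem u).2⟩
  have hQ'ii : ∀ a b : ℝ, IntervalIntegrable Q' volume a b := fun a b =>
    hQ'mono.intervalIntegrable
  -- the primitive function
  set G : ℝ → ℝ := fun α => (1 - α)⁻¹ * ∫ p in α..1, Q' p with hGdef
  have hJcont : Continuous fun α => ∫ p in α..1, Q' p := by
    have h1 : Continuous fun α => ∫ p in (1:ℝ)..α, Q' p :=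
      intervalIntegral.continuous_primitive (fun a b => hQ'ii a b) 1
    have heq : (fun α => ∫ p in α..1, Q' p) = fun α => -∫ p in (1:ℝ)..α, Q' p := by
      funext α; rw [intervalIntegral.integral_symm]
    rw [heq]; exact h1.neg
  have hGmeas : Measurable G :=
    ((measurable_const.sub measurable_id).inv).mul hJcont.measurable
  have hGbdd : ∀ α : ℝ, ‖G α‖ ≤ C := by
    intro α
    have h1 : ‖∫ p in α..1, Q' p‖ ≤ C * |1 - α| :=
      intervalIntegral.norm_integral_le_of_norm_le_const (fun x _ => hQ'bdd x)
    have h2 : |1 - α|⁻¹ * |1 - α| ≤ 1 := by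
      rcases eq_or_ne (1 - α) 0 with h | h
      · simp [h]
      · rw [inv_mul_cancel₀ (abs_ne_zero.2 h)]
    calc ‖G α‖ = |1 - α|⁻¹ * ‖∫ p in α..1, Q' p‖ := by
          rw [hGdef]; simp [Real.norm_eq_abs, abs_mul, abs_inv]
      _ ≤ |1 - α|⁻¹ * (C * |1 - α|) :=
          mul_le_mul_of_nonneg_left h1 (inv_nonneg.2 (abs_nonneg _))
      _ = C * (|1 - α|⁻¹ * |1 - α|) := by ring
      _ ≤ C * 1 := mul_le_mul_of_nonneg_left h2 hC0
      _ = C := mul_one C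
  have hCTE_G : ∀ α ∈ Icc (0:ℝ) 1, CTE P L α = G α := by
    intro α hα
    show (1 - α)⁻¹ * ∫ p in α..1, Q p = (1 - α)⁻¹ * ∫ p in α..1, Q' p
    congr 1
    rw [intervalIntegral.integral_of_le hα.2, intervalIntegral.integral_of_le hα.2]
    exact setIntegral_congr_fun measurableSet_Ioc
      (fun p hp => (hQ'eq p ⟨lt_of_le_of_lt hα.1 hp.1, hp.2⟩).symm)
  -- finiteness of the measures
  haveI i2 : IsFiniteMeasure (f.measure.restrict (Icc (0:ℝ) 1)) := by
    constructor
    rw [Measure.restrict_apply_univ, f.measure_Icc]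
    exact ENNReal.ofReal_lt_top
  haveI iIoc : IsFiniteMeasure (volume.restrict (Ioc (0:ℝ) 1)) := by
    constructor
    rw [Measure.restrict_apply_univ, Real.volume_Ioc]
    exact ENNReal.ofReal_lt_top
  haveI i3 : IsFiniteMeasure ((f.measure.restrict (Icc (0:ℝ) 1)).withDensity
      (fun α => ENNReal.ofReal (1 - α))) := by
    constructor
    rw [withDensity_apply _ MeasurableSet.univ, Measure.restrict_univ]
    calc ∫⁻ α, ENNReal.ofReal (1 - α) ∂(f.measure.restrict (Icc (0:ℝ) 1))
        ≤ ∫⁻ _, 1 ∂(f.measure.restrict (Icc (0:ℝ) 1)) := by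
          apply lintegral_mono_ae
          rw [ae_restrict_iff' measurableSet_Icc]
          refine Filter.Eventually.of_forall (fun α hα => ?_)
          calc ENNReal.ofReal (1 - α) ≤ ENNReal.ofReal 1 :=
                ENNReal.ofReal_le_ofReal (by linarith [hα.1])
            _ = 1 := ENNReal.ofReal_one
      _ = f.measure.restrict (Icc (0:ℝ) 1) univ := by simp
      _ < ⊤ := measure_lt_top _ _
  -- leftLim at 0 and the Icc measure
  have hleft0 : Function.leftLim (f : ℝ → ℝ) 0 = f 0 := by
    refine le_antisymm (f.mono.leftLim_le le_rfl) ?_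
    have h := f.mono.le_leftLim (show (-1:ℝ) < 0 by norm_num)
    rwa [h_left (-1) (by norm_num)] at h
  have hmeasIcc : ∀ p : ℝ, 0 ≤ p → (f.measure (Icc 0 p)).toReal = f p - f 0 := by
    intro p hp
    rw [f.measure_Icc, hleft0, ENNReal.toReal_ofReal (sub_nonneg.2 (f.mono hp))]
  -- integrability of G
  have hGintFin : ∀ (μ : Measure ℝ) [IsFiniteMeasure μ], Integrable G μ := by
    intro μ _
    exact Integrable.mono' (integrable_const C) hGmeas.aestronglyMeasurable
      (Filter.Eventually.of_forall hGbdd)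
  have hmu : muSigma f = (ENNReal.ofReal (f 0)) • Measure.dirac 0 +
      (f.measure.restrict (Icc (0:ℝ) 1)).withDensity (fun α => ENNReal.ofReal (1 - α)) := rfl
  -- replace CTE by G
  have hcongr : ∫ α, CTE P L α ∂(muSigma f) = ∫ α, G α ∂(muSigma f) := by
    apply integral_congr_ae
    rw [hmu]
    have h1 : ∀ᵐ α ∂((ENNReal.ofReal (f 0)) • Measure.dirac (0:ℝ)), CTE P L α = G α := by
      apply Measure.ae_smul_measure
      rw [ae_dirac_eq]
      exact Filter.eventually_pure.2 (hCTE_G 0 ⟨le_rfl, zero_le_one⟩)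
    have h2 : ∀ᵐ α ∂((f.measure.restrict (Icc (0:ℝ) 1)).withDensity
        (fun α => ENNReal.ofReal (1 - α))), CTE P L α = G α :=
      (ae_restrict_of_forall_mem measurableSet_Icc hCTE_G).filter_mono
        (withDensity_absolutelyContinuous _ _).ae_le
    exact ae_add_measure_iff.2 ⟨h1, h2⟩
  rw [hcongr, hmu, integral_add_measure
    ((hGintFin (Measure.dirac 0)).smul_measure ENNReal.ofReal_ne_top)
    (hGintFin _)]
  -- the dirac term
  have hG0 : G 0 = ∫ p in Ioc (0:ℝ) 1, Q' p := by
    rw [hGdef]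
    simp only [sub_zero, inv_one, one_mul]
    rw [intervalIntegral.integral_of_le zero_le_one]
  have hterm1 : ∫ α, G α ∂((ENNReal.ofReal (f 0)) • Measure.dirac (0:ℝ))
      = f 0 * ∫ p in Ioc (0:ℝ) 1, Q' p := by
    rw [integral_smul_measure, integral_dirac, ENNReal.toReal_ofReal h_nonneg, smul_eq_mul, hG0]
  -- the withDensity term
  have hterm2 : ∫ α, G α ∂((f.measure.restrict (Icc (0:ℝ) 1)).withDensity
      (fun α => ENNReal.ofReal (1 - α))) = ∫ p in Ioc (0:ℝ) 1, (f p - f 0) * Q' p := by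
    have hdens : (fun α : ℝ => ENNReal.ofReal (1 - α))
        = fun α : ℝ => ((fun β : ℝ => Real.toNNReal (1 - β)) α : ENNReal) := rfl
    rw [hdens, integral_withDensity_eq_integral_smul
      (f := fun β : ℝ => Real.toNNReal (1 - β))
      ((measurable_const.sub measurable_id).real_toNNReal) G]
    -- pointwise identification on Icc 0 1
    have hstep : ∀ α ∈ Icc (0:ℝ) 1,
        (Real.toNNReal (1 - α)) • G α = ∫ p in Ioc (0:ℝ) 1, (Ici α).indicator Q' p := by
      intro α hα
      have hind : ∫ p in Ioc (0:ℝ) 1, (Ici α).indicator Q' p = ∫ p in Ioc α 1, Q' p := by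
        rw [setIntegral_indicator measurableSet_Ici]
        apply setIntegral_congr_set
        rw [MeasureTheory.ae_eq_set]
        constructor
        · refine measure_mono_null (fun x hx => ?_) (Real.volume_singleton (a := α))
          obtain ⟨⟨hx1, hx2⟩, hx3⟩ := hx
          have hxa : ¬ α < x := fun h => hx3 ⟨h, hx1.2⟩
          have hxe : x = α := le_antisymm (not_lt.1 hxa) hx2
          simp [hxe]
        · refine measure_mono_null (fun x hx => ?_) (measure_empty (μ := volume))
          obtain ⟨hx1, hx3⟩ := hx
          exact absurd ⟨⟨lt_of_le_of_lt hα.1 hx1.1, hx1.2⟩, le_of_lt hx1.1⟩ hx3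
      rw [hind]
      rcases eq_or_lt_of_le hα.2 with h1 | h1
      · subst h1
        simp [Set.Ioc_self]
      · have h10 : (0:ℝ) < 1 - α := by linarith
        rw [NNReal.smul_def, Real.coe_toNNReal _ (le_of_lt h10), hGdef]
        simp only [smul_eq_mul]
        rw [intervalIntegral.integral_of_le hα.2]
        field_simp
    rw [setIntegral_congr_fun measurableSet_Icc hstep]
    -- Fubini
    have hunc : (Function.uncurry fun (α p : ℝ) => (Ici α).indicator Q' p)
        = fun q : ℝ × ℝ => if q.1 ≤ q.2 then Q' q.2 else 0 := by
      funext q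
      simp [Function.uncurry, Set.indicator_apply, mem_Ici]
    have hFmeas : Measurable (Function.uncurry fun (α p : ℝ) => (Ici α).indicator Q' p) := by
      rw [hunc]
      exact Measurable.ite (measurableSet_le measurable_fst measurable_snd)
        (hQ'meas.comp measurable_snd) measurable_const
    have hFint : Integrable (Function.uncurry fun (α p : ℝ) => (Ici α).indicator Q' p)
        ((f.measure.restrict (Icc (0:ℝ) 1)).prod (volume.restrict (Ioc (0:ℝ) 1))) := by
      refine Integrable.mono' (integrable_const C) hFmeas.aestronglyMeasurable
        (Filter.Eventually.of_forall (fun q => ?_))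
      rw [hunc]
      dsimp only
      split
      · exact hQ'bdd _
      · simp [hC0]
    have hswap := integral_integral_swap hFint
    rw [hswap]
    -- inner integral
    apply setIntegral_congr_fun measurableSet_Ioc
    intro p hp
    dsimp only
    have hfun : (fun α => (Ici α).indicator Q' p) = (Iic p).indicator (fun _ => Q' p) := by
      funext α
      simp [Set.indicator_apply, mem_Ici, mem_Iic]
    rw [hfun, setIntegral_indicator measurableSet_Iic, setIntegral_const]
    have hset : Icc (0:ℝ) 1 ∩ Iic p = Icc 0 p := by
      ext x
      simp only [mem_inter_iff, mem_Icc, mem_Iic]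
      constructor
      · rintro ⟨⟨a, _⟩, c⟩; exact ⟨a, c⟩
      · rintro ⟨a, c⟩; exact ⟨⟨a, c.trans hp.2⟩, c⟩
    rw [hset, measureReal_def, hmeasIcc p (le_of_lt hp.1), smul_eq_mul]
  rw [hterm1, hterm2]
  -- final algebra
  have hQ'int : IntegrableOn Q' (Ioc (0:ℝ) 1) volume := (hQ'ii 0 1).1
  have hf10 : (0:ℝ) ≤ f 1 - f 0 := sub_nonneg.2 (f.mono zero_le_one)
  have hfint : IntegrableOn (fun p => (f p - f 0) * Q' p) (Ioc (0:ℝ) 1) volume := by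
    refine Integrable.mono' (integrable_const ((f 1 - f 0) * C))
      (((f.mono.measurable.sub measurable_const).mul hQ'meas).aestronglyMeasurable) ?_
    rw [ae_restrict_iff' measurableSet_Ioc]
    refine Filter.Eventually.of_forall (fun p hp => ?_)
    rw [Real.norm_eq_abs, abs_mul]
    have h1 : |f p - f 0| ≤ f 1 - f 0 := by
      rw [abs_of_nonneg (sub_nonneg.2 (f.mono (le_of_lt hp.1)))]
      have := f.mono hp.2
      linarith
    have h2 : |Q' p| ≤ C := by rw [← Real.norm_eq_abs]; exact hQ'bdd p
    exact mul_le_mul h1 h2 (abs_nonneg _) hf10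
  calc f 0 * (∫ p in Ioc (0:ℝ) 1, Q' p) + ∫ p in Ioc (0:ℝ) 1, (f p - f 0) * Q' p
      = (∫ p in Ioc (0:ℝ) 1, f 0 * Q' p) + ∫ p in Ioc (0:ℝ) 1, (f p - f 0) * Q' p := by
        rw [MeasureTheory.integral_const_mul]
    _ = ∫ p in Ioc (0:ℝ) 1, (f 0 * Q' p + (f p - f 0) * Q' p) :=
        (integral_add (hQ'int.const_mul _) hfint).symm
    _ = ∫ p in Ioc (0:ℝ) 1, Q p * f p := by
        apply setIntegral_congr_fun measurableSet_Ioc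
        intro p hp
        dsimp only
        rw [← hQ'eq p hp]; ring
    _ = distortedPremium P L f := by
        show _ = ∫ u in (0:ℝ)..1, Q u * f u
        rw [intervalIntegral.integral_of_le zero_le_one]
end

section
/- Let μ be a Borel probability measure on [0,1] with μ({1}) = 0 and ∫_{[0,1)} (1−p)⁻¹ μ(dp) < ∞, and let σ_μ(α) := ∫_{[0,α]} (1−p)⁻¹ μ(dp). Then for every essentially bounded real random variable L, π_{σ_μ}(L) = ∫_{[0,1]} CTE_α(L) μ(dα), and moreover ∫_α¹ σ_μ(p) dp = ∫_{[0,1]} min{(1−α)/(1−p), 1} μ(dp) for all α ∈ [0,1]. -/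
open MeasureTheory Set
open scoped ENNReal

/-- `σ_μ(α) = ∫_{[0,α]} (1−p)⁻¹ μ(dp)`. -/
noncomputable def sigmaMu (μ : Measure ℝ) (α : ℝ) : ℝ :=
  ∫ p in Icc (0:ℝ) α, (1 - p)⁻¹ ∂μ

/-- for a Borel probability measure `μ` on `[0,1]` with `μ({1}) = 0` and
`∫_{[0,1)} (1−p)⁻¹ μ(dp) < ∞`, and every essentially bounded real random variable `L`,
`π_{σ_μ}(L) = ∫ CTE_α(L) μ(dα)`, and moreover
`∫_α¹ σ_μ(p) dp = ∫ min{(1−α)/(1−p), 1} μ(dp)` for all `α ∈ [0,1]`. -/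
theorem statement_7 {Ω : Type*} [MeasurableSpace Ω] (P : Measure Ω) [IsProbabilityMeasure P]
    (L : Ω → ℝ) (hL : Measurable L) (hLbdd : MemLp L ⊤ P)
    (μ : Measure ℝ) [IsProbabilityMeasure μ]
    (hsupp : μ (Icc (0:ℝ) 1)ᶜ = 0)
    (h1 : μ {(1:ℝ)} = 0)
    (hint : IntegrableOn (fun p : ℝ => (1 - p)⁻¹) (Ico (0:ℝ) 1) μ) :
    distortedPremium P L (sigmaMu μ) = (∫ α, CTE P L α ∂μ) ∧
      ∀ α ∈ Icc (0:ℝ) 1,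
        (∫ p in α..1, sigmaMu μ p) = ∫ p, min ((1 - α) / (1 - p)) 1 ∂μ := by
  -- μ is concentrated on [0,1)
  have hae : ∀ᵐ p ∂μ, p ∈ Ico (0:ℝ) 1 := by
    rw [ae_iff]
    refine measure_mono_null ?_ (measure_union_null hsupp h1)
    intro x hx
    simp only [mem_Ico, mem_setOf_eq, not_and, not_lt] at hx
    rcases lt_or_ge x 0 with h0 | h0
    · exact Or.inl (by simp only [mem_compl_iff, mem_Icc, not_and, not_le]; intro h; linarith)
    · have h1x : (1:ℝ) ≤ x := hx h0
      rcases eq_or_lt_of_le h1x with heq | hlt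
      · exact Or.inr (by simp [heq.symm])
      · exact Or.inl (by simp only [mem_compl_iff, mem_Icc, not_and, not_le]; intro _; exact hlt)
  have hres : μ.restrict (Ico (0:ℝ) 1) = μ := Measure.restrict_eq_self_of_ae_mem hae
  have hint' : Integrable (fun p : ℝ => (1 - p)⁻¹) μ := by
    rw [IntegrableOn, hres] at hint; exact hint
  -- the essential bound
  set C : ℝ := (eLpNormEssSup L P).toReal with hCdef
  have hC0 : 0 ≤ C := ENNReal.toReal_nonneg
  have habs : ∀ᵐ ω ∂P, |L ω| ≤ C := by
    have hfin : eLpNormEssSup L P ≠ ∞ := by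
      have h2 := hLbdd.2
      rw [eLpNorm_exponent_top] at h2
      exact h2.ne
    filter_upwards [ae_le_eLpNormEssSup (f := L) (μ := P)] with ω hω
    have := ENNReal.toReal_mono hfin hω
    simpa [Real.norm_eq_abs] using this
  have hnull : P {ω | ¬ |L ω| ≤ C} = 0 := ae_iff.mp habs
  -- cdf facts
  have hPC : P {ω | L ω ≤ C} = 1 := by
    refine (prob_compl_eq_zero_iff (s := {ω | L ω ≤ C}) (hL measurableSet_Iic)).mp ?_
    refine measure_mono_null ?_ hnull
    intro ω hω
    simp only [mem_compl_iff, mem_setOf_eq, not_le] at hω ⊢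
    exact lt_of_lt_of_le hω (le_abs_self _)
  have hcdfC : cdfRV P L C = 1 := by rw [cdfRV, hPC, ENNReal.toReal_one]
  have hcdf0 : ∀ x : ℝ, x < -C → cdfRV P L x = 0 := by
    intro x hx
    have h0 : P {ω | L ω ≤ x} = 0 := by
      refine measure_mono_null ?_ hnull
      intro ω hω
      simp only [mem_setOf_eq] at hω ⊢
      intro hc
      rw [abs_le] at hc
      linarith [hc.1]
    rw [cdfRV, h0, ENNReal.toReal_zero]
  set g : ℝ → ℝ := quantileRV P L with hgdef
  have hCmem : ∀ u : ℝ, u ≤ 1 → C ∈ {x : ℝ | u ≤ cdfRV P L x} := by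
    intro u hu; simpa [mem_setOf_eq, hcdfC] using hu
  have hlow : ∀ u : ℝ, 0 < u → ∀ x ∈ {x : ℝ | u ≤ cdfRV P L x}, -C ≤ x := by
    intro u hu x hx
    by_contra h
    push_neg at h
    rw [mem_setOf_eq, hcdf0 x h] at hx
    linarith
  have hgbd : ∀ u ∈ Ioc (0:ℝ) 1, -C ≤ g u ∧ g u ≤ C := by
    intro u hu
    constructor
    · exact le_csInf ⟨C, hCmem u hu.2⟩ (hlow u hu.1)
    · exact csInf_le ⟨-C, hlow u hu.1⟩ (hCmem u hu.2)
  have hmono : MonotoneOn g (Ioc (0:ℝ) 1) := by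
    intro u hu v hv huv
    exact csInf_le_csInf ⟨-C, hlow u hu.1⟩ ⟨C, hCmem v hv.2⟩ (fun x hx => le_trans huv hx)
  set ν : Measure ℝ := volume.restrict (Ioc (0:ℝ) 1) with hνdef
  haveI hνfin : IsFiniteMeasure ν := by
    constructor
    rw [hνdef, Measure.restrict_apply_univ, Real.volume_Ioc]
    exact ENNReal.ofReal_lt_top
  have hgae : AEMeasurable g ν := aemeasurable_restrict_of_monotoneOn measurableSet_Ioc hmono
  set g₁ : ℝ → ℝ := fun u => max (-C) (min (hgae.mk g u) C) with hg₁def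
  have hg₁m : Measurable g₁ :=
    measurable_const.max ((hgae.measurable_mk.min measurable_const))
  have hg₁bd : ∀ u, |g₁ u| ≤ C := by
    intro u
    rw [abs_le]
    exact ⟨le_max_left _ _, max_le (by linarith) (min_le_right _ _)⟩
  have hg₁ae : g =ᵐ[ν] g₁ := by
    filter_upwards [hgae.ae_eq_mk, ae_restrict_mem measurableSet_Ioc] with u h1' h2'
    have hb := hgbd u h2'
    rw [hg₁def]
    simp only [← h1']
    rw [min_eq_left hb.2, max_eq_right hb.1]
  -- rewriting sigmaMu as an integral of an indicator
  have hσ : ∀ x : ℝ, sigmaMu μ x = ∫ q, (Iic x).indicator (fun q => (1 - q)⁻¹) q ∂μ := by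
    intro x
    rw [sigmaMu, integral_indicator measurableSet_Iic]
    refine setIntegral_congr_set ?_
    rw [Filter.eventuallyEq_set]
    filter_upwards [hae] with q hq
    simp only [mem_Icc, mem_Iic]
    exact ⟨fun h => h.2, fun h => ⟨hq.1, h⟩⟩
  constructor
  · -- main identity
    have hInt1 : Integrable (Function.uncurry fun u q : ℝ => if q ≤ u then g₁ u * (1 - q)⁻¹ else 0)
        (ν.prod μ) := by
      have hmeas : Measurable (Function.uncurry fun u q : ℝ => if q ≤ u then g₁ u * (1 - q)⁻¹ else 0) := by
        refine Measurable.ite (measurableSet_le measurable_snd measurable_fst) ?_ measurable_const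
        exact (hg₁m.comp measurable_fst).mul ((measurable_const.sub measurable_snd).inv)
      have hbnd : Integrable (fun z : ℝ × ℝ => (fun _ : ℝ => C) z.1 * (fun q => |(1 - q)⁻¹|) z.2)
          (ν.prod μ) := (integrable_const C).mul_prod hint'.abs
      refine Integrable.mono' hbnd hmeas.aestronglyMeasurable (ae_of_all _ fun z => ?_)
      simp only [Function.uncurry, Real.norm_eq_abs]
      split_ifs with h
      · rw [abs_mul]
        exact mul_le_mul_of_nonneg_right (hg₁bd z.1) (abs_nonneg _)
      · simp only [abs_zero]
        positivity
    have hApt : ∀ u : ℝ, g₁ u * sigmaMu μ u = ∫ q, (if q ≤ u then g₁ u * (1 - q)⁻¹ else 0) ∂μ := by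
      intro u
      have hfe : (fun q : ℝ => if q ≤ u then g₁ u * (1 - q)⁻¹ else 0)
          = fun q => g₁ u * (Iic u).indicator (fun q => (1 - q)⁻¹) q := by
        funext q
        by_cases h : q ≤ u <;> simp [indicator_apply, mem_Iic, h]
      rw [hfe, integral_const_mul, ← hσ u]
    calc distortedPremium P L (sigmaMu μ)
        = ∫ u in Ioc (0:ℝ) 1, g u * sigmaMu μ u := by
          rw [distortedPremium, intervalIntegral.integral_of_le zero_le_one]
      _ = ∫ u in Ioc (0:ℝ) 1, g₁ u * sigmaMu μ u := by
          refine integral_congr_ae ?_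
          filter_upwards [hg₁ae] with u hu
          rw [hu]
      _ = ∫ u, (∫ q, (if q ≤ u then g₁ u * (1 - q)⁻¹ else 0) ∂μ) ∂ν :=
          integral_congr_ae (ae_of_all _ hApt)
      _ = ∫ q, (∫ u, (if q ≤ u then g₁ u * (1 - q)⁻¹ else 0) ∂ν) ∂μ :=
          integral_integral_swap hInt1
      _ = ∫ q, CTE P L q ∂μ := by
          refine integral_congr_ae ?_
          filter_upwards [hae] with q hq
          have h1q : (0:ℝ) < 1 - q := by linarith [hq.2]
          have hrw : (fun u : ℝ => if q ≤ u then g₁ u * (1 - q)⁻¹ else 0)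
              = (Ici q).indicator (fun u => g₁ u * (1 - q)⁻¹) := by
            funext u
            by_cases h : q ≤ u <;> simp [indicator_apply, mem_Ici, h]
          rw [hνdef, hrw, setIntegral_indicator measurableSet_Ici]
          have hset : (Ioc (0:ℝ) 1 ∩ Ici q : Set ℝ) =ᵐ[volume] Ioc q 1 := by
            have hq0 : volume ({q} : Set ℝ) = 0 := Real.volume_singleton
            have hne : ∀ᵐ x : ℝ, x ≠ q := by
              rw [ae_iff]
              simpa using hq0
            rw [Filter.eventuallyEq_set]
            filter_upwards [hne] with x hx
            simp only [mem_inter_iff, mem_Ioc, mem_Ici]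
            constructor
            · rintro ⟨⟨_, hx1⟩, hqx⟩
              exact ⟨lt_of_le_of_ne hqx (Ne.symm hx), hx1⟩
            · rintro ⟨hqx, hx1⟩
              exact ⟨⟨lt_of_le_of_lt hq.1 hqx, hx1⟩, hqx.le⟩
          rw [setIntegral_congr_set hset, integral_mul_const]
          have hgg : ∫ u in Ioc q 1, g₁ u = ∫ u in Ioc q 1, g u := by
            refine integral_congr_ae ?_
            have hsub : Ioc q 1 ⊆ Ioc (0:ℝ) 1 := Ioc_subset_Ioc_left hq.1
            exact ae_restrict_of_ae_restrict_of_subset hsub hg₁ae.symm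
          rw [hgg, CTE, ← intervalIntegral.integral_of_le hq.2.le, mul_comm]
  · -- second identity
    intro α hα
    have hInt2 : Integrable (Function.uncurry fun p q : ℝ => if q ≤ p then (1 - q)⁻¹ else 0)
        ((volume.restrict (Ioc α 1)).prod μ) := by
      haveI : IsFiniteMeasure (volume.restrict (Ioc α (1:ℝ))) := by
        constructor
        rw [Measure.restrict_apply_univ, Real.volume_Ioc]
        exact ENNReal.ofReal_lt_top
      have hmeas : Measurable (Function.uncurry fun p q : ℝ => if q ≤ p then (1 - q)⁻¹ else 0) := by
        refine Measurable.ite (measurableSet_le measurable_snd measurable_fst) ?_ measurable_const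
        exact (measurable_const.sub measurable_snd).inv
      have hbnd : Integrable (fun z : ℝ × ℝ => (fun _ : ℝ => (1:ℝ)) z.1 * (fun q => |(1 - q)⁻¹|) z.2)
          ((volume.restrict (Ioc α 1)).prod μ) := (integrable_const 1).mul_prod hint'.abs
      refine Integrable.mono' hbnd hmeas.aestronglyMeasurable (ae_of_all _ fun z => ?_)
      simp only [Function.uncurry, Real.norm_eq_abs, one_mul]
      split_ifs with h
      · exact le_refl _
      · simp only [abs_zero]
        positivity
    have hBpt : ∀ p : ℝ, sigmaMu μ p = ∫ q, (if q ≤ p then (1 - q)⁻¹ else 0) ∂μ := by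
      intro p
      rw [hσ p]
      simp only [indicator_apply, mem_Iic]
    calc ∫ p in α..1, sigmaMu μ p
        = ∫ p in Ioc α 1, sigmaMu μ p := intervalIntegral.integral_of_le hα.2
      _ = ∫ p, (∫ q, (if q ≤ p then (1 - q)⁻¹ else 0) ∂μ) ∂(volume.restrict (Ioc α 1)) :=
          integral_congr_ae (ae_of_all _ hBpt)
      _ = ∫ q, (∫ p, (if q ≤ p then (1 - q)⁻¹ else 0) ∂(volume.restrict (Ioc α 1))) ∂μ :=
          integral_integral_swap hInt2
      _ = ∫ q, min ((1 - α) / (1 - q)) 1 ∂μ := by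
          refine integral_congr_ae ?_
          filter_upwards [hae] with q hq
          have h1q : (0:ℝ) < 1 - q := by linarith [hq.2]
          have hrw : (fun p : ℝ => if q ≤ p then (1 - q)⁻¹ else 0)
              = (Ici q).indicator (fun _ => (1 - q)⁻¹) := by
            funext p
            by_cases h : q ≤ p <;> simp [indicator_apply, mem_Ici, h]
          rw [hrw, setIntegral_indicator measurableSet_Ici, setIntegral_const, smul_eq_mul]
          rcases le_or_gt q α with hqα | hqα
          · have hset : Ioc α 1 ∩ Ici q = Ioc α 1 :=
              inter_eq_left.mpr (fun x hx => le_trans hqα hx.1.le)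
            rw [hset, Real.volume_real_Ioc_of_le hα.2]
            rw [min_eq_left ((div_le_one h1q).mpr (by linarith)), div_eq_mul_inv]
          · have hset : Ioc α 1 ∩ Ici q = Icc q 1 := by
              ext x
              simp only [mem_inter_iff, mem_Ioc, mem_Icc, mem_Ici]
              constructor
              · rintro ⟨⟨_, hx1⟩, hqx⟩; exact ⟨hqx, hx1⟩
              · rintro ⟨hqx, hx1⟩; exact ⟨⟨lt_of_lt_of_le hqα hqx, hx1⟩, hqx⟩
            rw [hset, Real.volume_real_Icc_of_le hq.2.le]
            rw [min_eq_right (by rw [le_div_iff₀ h1q]; linarith [hα.1])]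
            exact mul_inv_cancel₀ h1q.ne'
end

section
/- Let (Ω, F, P) be an atomless probability space, α ∈ [0,1), and L an essentially bounded real random variable. Then CTE_α(L) = sup{ E[L·Z] : Z integrable, E[Z] = 1, Z ≥ 0 almost surely, and (1−α)·Z ≤ 1 almost surely }. -/
open MeasureTheory Set
open scoped ENNReal

/-- A probability measure is atomless if every set of positive measure contains a measurable
subset of strictly smaller positive measure. -/
def AtomlessMeasure {Ω : Type*} [MeasurableSpace Ω] (P : Measure Ω) : Prop :=
  ∀ A : Set Ω, MeasurableSet A → 0 < P A →
    ∃ B ⊆ A, MeasurableSet B ∧ 0 < P B ∧ P B < P A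

/-- on an atomless probability space, for `α ∈ [0,1)` and `L` essentially
bounded, `CTE_α(L) = sup { E[L·Z] : E[Z] = 1, Z ≥ 0 a.s., (1−α)Z ≤ 1 a.s. }`. -/
theorem statement_12 {Ω : Type*} [MeasurableSpace Ω] (P : Measure Ω) [IsProbabilityMeasure P]
    (hatomless : AtomlessMeasure P)
    (α : ℝ) (hα : α ∈ Ico (0:ℝ) 1)
    (L : Ω → ℝ) (hL : Measurable L) (hLbdd : MemLp L ⊤ P) :
    IsLUB {r : ℝ | ∃ Z : Ω → ℝ, Integrable Z P ∧ (∫ ω, Z ω ∂P) = 1 ∧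
        (∀ᵐ ω ∂P, 0 ≤ Z ω) ∧ (∀ᵐ ω ∂P, (1 - α) * Z ω ≤ 1) ∧
        r = ∫ ω, L ω * Z ω ∂P}
      (CTE P L α) := by
  obtain ⟨hα0, hα1⟩ := hα
  have hαlt : (0:ℝ) < 1 - α := by linarith
  set c : ℝ := (1 - α)⁻¹ with hc
  have hc_pos : 0 < c := inv_pos.mpr hαlt
  have hc1 : c * (1 - α) = 1 := inv_mul_cancel₀ hαlt.ne'
  -- essential bound
  obtain ⟨C, hC0, hCae⟩ : ∃ C : ℝ, 0 ≤ C ∧ ∀ᵐ ω ∂P, |L ω| ≤ C := by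
    refine ⟨(eLpNormEssSup L P).toReal, ENNReal.toReal_nonneg, ?_⟩
    have hfin : eLpNormEssSup L P ≠ ∞ := by
      have h2 := hLbdd.2
      rwa [eLpNorm_exponent_top, lt_top_iff_ne_top] at h2
    filter_upwards [ae_le_eLpNormEssSup (f := L) (μ := P)] with ω hω
    have := ENNReal.toReal_mono hfin hω
    simpa [Real.norm_eq_abs] using this
  -- basic facts about F
  set F : ℝ → ℝ := cdfRV P L with hF
  have hFdef : ∀ x, F x = (P {ω | L ω ≤ x}).toReal := fun _ => rfl
  have hmeas_le : ∀ x : ℝ, MeasurableSet {ω | L ω ≤ x} := fun x => hL measurableSet_Iic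
  have hF_mono : Monotone F := by
    intro x y hxy
    exact ENNReal.toReal_mono (measure_ne_top P _)
      (measure_mono (fun ω h => le_trans h hxy))
  have hF_le_one : ∀ x, F x ≤ 1 := by
    intro x
    have := ENNReal.toReal_mono (a := P {ω | L ω ≤ x}) ENNReal.one_ne_top prob_le_one
    exact this
  have hF_one : ∀ x, C ≤ x → F x = 1 := by
    intro x hx
    have h0 : P {ω | L ω ≤ x}ᶜ = 0 := by
      have : ∀ᵐ ω ∂P, L ω ≤ x := by
        filter_upwards [hCae] with ω hω
        exact le_trans (le_trans (le_abs_self _) hω) hx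
      rw [ae_iff] at this
      simpa [compl_setOf] using this
    have h1 : P {ω | L ω ≤ x} = 1 := by
      have := measure_add_measure_compl (μ := P) (hmeas_le x)
      rw [h0, add_zero, measure_univ] at this
      exact this
    rw [hFdef, h1, ENNReal.toReal_one]
  have hF_zero : ∀ x, x < -C → F x = 0 := by
    intro x hx
    have h0 : P {ω | L ω ≤ x} = 0 := by
      have hnull : P {ω | ¬ |L ω| ≤ C} = 0 := by rw [← ae_iff]; exact hCae
      refine measure_mono_null ?_ hnull
      intro ω h
      simp only [mem_setOf_eq, not_le] at *
      have : L ω < -C := lt_of_le_of_lt h hx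
      linarith [neg_abs_le (L ω)]
    rw [hFdef, h0, ENNReal.toReal_zero]
  -- right continuity consequence
  have hF_rc : ∀ x r : ℝ, (∀ n : ℕ, r ≤ F (x + 1/(n+1))) → r ≤ F x := by
    intro x r h
    have hanti : Antitone (fun n : ℕ => {ω | L ω ≤ x + 1/(n+1)}) := by
      intro m n hmn ω hω
      simp only [mem_setOf_eq] at *
      refine le_trans hω ?_
      have : (1:ℝ)/(n+1) ≤ 1/(m+1) := by
        apply one_div_le_one_div_of_le (by positivity)
        have : (m:ℝ) ≤ n := Nat.cast_le.mpr hmn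
        linarith
      linarith
    have hiInter : (⋂ n : ℕ, {ω | L ω ≤ x + 1/(n+1)}) = {ω | L ω ≤ x} := by
      ext ω
      simp only [mem_iInter, mem_setOf_eq]
      constructor
      · intro hall
        refine le_of_forall_pos_le_add fun ε hε => ?_
        obtain ⟨n, hn⟩ := exists_nat_one_div_lt hε
        exact le_trans (hall n) (by linarith)
      · intro hω n
        have : (0:ℝ) < 1/(n+1) := by positivity
        linarith
    have hTend : Filter.Tendsto (fun n : ℕ => P {ω | L ω ≤ x + 1/(n+1)}) Filter.atTop
        (nhds (P {ω | L ω ≤ x})) := by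
      have := tendsto_measure_iInter_atTop (μ := P)
        (s := fun n : ℕ => {ω | L ω ≤ x + 1/(n+1)})
        (fun n => (hmeas_le _).nullMeasurableSet) hanti ⟨0, measure_ne_top _ _⟩
      rwa [hiInter] at this
    have hTendR : Filter.Tendsto (fun n : ℕ => F (x + 1/(n+1))) Filter.atTop (nhds (F x)) :=
      (ENNReal.tendsto_toReal (measure_ne_top P _)).comp hTend
    exact ge_of_tendsto' hTendR h
  -- the quantile q at level α
  set T : Set ℝ := {x | α < F x} with hT
  have hCT : C ∈ T := by
    simp only [hT, mem_setOf_eq, hF_one C le_rfl]; exact hα1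
  have hT_ne : T.Nonempty := ⟨C, hCT⟩
  have hT_bdd : BddBelow T := by
    refine ⟨-C, fun x hx => ?_⟩
    by_contra hcon
    push_neg at hcon
    have := hF_zero x hcon
    simp only [hT, mem_setOf_eq, this] at hx
    linarith
  set q : ℝ := sInf T with hq
  have hq_gt : ∀ x, q < x → α < F x := by
    intro x hx
    obtain ⟨y, hyT, hyx⟩ := exists_lt_of_csInf_lt hT_ne hx
    exact lt_of_lt_of_le hyT (hF_mono hyx.le)
  have hFq : α ≤ F q := by
    refine hF_rc q α fun n => ?_
    refine (hq_gt _ ?_).le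
    have : (0:ℝ) < 1/(n+1) := by positivity
    linarith
  have hq_lt : ∀ x, x < q → F x ≤ α := by
    intro x hx
    by_contra hcon
    push_neg at hcon
    exact absurd (csInf_le hT_bdd hcon) (not_le.mpr hx)
  -- P(L < q) ≤ α
  have hlt_q : (P {ω | L ω < q}).toReal ≤ α := by
    have hmono : Monotone (fun n : ℕ => {ω | L ω ≤ q - 1/(n+1)}) := by
      intro m n hmn ω hω
      simp only [mem_setOf_eq] at *
      have h1 : (1:ℝ)/(n+1) ≤ 1/(m+1) := by
        apply one_div_le_one_div_of_le (by positivity)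
        have : (m:ℝ) ≤ n := Nat.cast_le.mpr hmn
        linarith
      linarith
    have hiUnion : (⋃ n : ℕ, {ω | L ω ≤ q - 1/(n+1)}) = {ω | L ω < q} := by
      ext ω
      simp only [mem_iUnion, mem_setOf_eq]
      constructor
      · rintro ⟨n, hn⟩
        have : (0:ℝ) < 1/(n+1) := by positivity
        linarith
      · intro hω
        obtain ⟨n, hn⟩ := exists_nat_one_div_lt (sub_pos.mpr hω)
        exact ⟨n, by linarith⟩
    have hTend : Filter.Tendsto (fun n : ℕ => P {ω | L ω ≤ q - 1/(n+1)}) Filter.atTop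
        (nhds (P {ω | L ω < q})) := by
      have := tendsto_measure_iUnion_atTop (μ := P)
        (s := fun n : ℕ => {ω | L ω ≤ q - 1/(n+1)}) hmono
      rwa [hiUnion] at this
    have hTendR : Filter.Tendsto (fun n : ℕ => F (q - 1/(n+1))) Filter.atTop
        (nhds ((P {ω | L ω < q}).toReal)) :=
      (ENNReal.tendsto_toReal (measure_ne_top P _)).comp hTend
    refine le_of_tendsto' hTendR fun n => ?_
    refine hq_lt _ ?_
    have : (0:ℝ) < 1/(n+1) := by positivity
    linarith
  -- quantile function facts
  have hQdef : ∀ p : ℝ, quantileRV P L p = sInf {x | p ≤ F x} := fun _ => rfl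
  have hS_ne : ∀ p : ℝ, p ≤ 1 → C ∈ {x | p ≤ F x} := by
    intro p hp
    simp only [mem_setOf_eq, hF_one C le_rfl]; exact hp
  have hS_bdd : ∀ p : ℝ, 0 < p → BddBelow {x | p ≤ F x} := by
    intro p hp
    refine ⟨-C, fun x hx => ?_⟩
    by_contra hcon
    push_neg at hcon
    have := hF_zero x hcon
    simp only [mem_setOf_eq, this] at hx
    linarith
  have hFQ : ∀ p : ℝ, 0 < p → p ≤ 1 → p ≤ F (quantileRV P L p) := by
    intro p hp0 hp1
    refine hF_rc _ p fun n => ?_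
    have hlt : quantileRV P L p < quantileRV P L p + 1/(n+1) := by
      have : (0:ℝ) < 1/(n+1) := by positivity
      linarith
    rw [hQdef] at hlt
    obtain ⟨y, hy, hyx⟩ := exists_lt_of_csInf_lt ⟨C, hS_ne p hp1⟩ hlt
    exact le_trans hy (hF_mono hyx.le)
  have hgalois : ∀ p s : ℝ, 0 < p → p ≤ 1 → (quantileRV P L p ≤ s ↔ p ≤ F s) := by
    intro p s hp0 hp1
    constructor
    · intro h
      exact le_trans (hFQ p hp0 hp1) (hF_mono h)
    · intro h
      rw [hQdef]
      exact csInf_le (hS_bdd p hp0) h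
  have hQq : ∀ p : ℝ, α < p → p ≤ 1 → q ≤ quantileRV P L p := by
    intro p hp0 hp1
    rw [hq, hQdef]
    refine csInf_le_csInf hT_bdd ⟨C, hS_ne p hp1⟩ ?_
    intro x hx
    simp only [mem_setOf_eq] at *
    exact lt_of_lt_of_le hp0 hx
  have hQle : ∀ p : ℝ, 0 < p → p ≤ 1 → quantileRV P L p ≤ C := by
    intro p hp0 hp1
    rw [hQdef]
    exact csInf_le (hS_bdd p hp0) (hS_ne p hp1)
  have hQge : ∀ p : ℝ, 0 < p → p ≤ 1 → -C ≤ quantileRV P L p := by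
    intro p hp0 hp1
    rw [hQdef]
    refine le_csInf ⟨C, hS_ne p hp1⟩ ?_
    intro x hx
    by_contra hcon
    push_neg at hcon
    have := hF_zero x hcon
    simp only [mem_setOf_eq, this] at hx
    linarith
  -- integrability of the quantile function on (α, 1]
  have hQmono : MonotoneOn (quantileRV P L) (Ioc α 1) := by
    intro u hu v hv huv
    rw [hQdef, hQdef]
    refine csInf_le_csInf (hS_bdd u (lt_of_le_of_lt hα0 hu.1)) ⟨C, hS_ne v hv.2⟩ ?_
    intro x hx
    exact le_trans huv hx
  have hQint : IntegrableOn (quantileRV P L) (Ioc α 1) volume := by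
    have hmeas : AEMeasurable (quantileRV P L) (volume.restrict (Ioc α 1)) :=
      aemeasurable_restrict_of_monotoneOn measurableSet_Ioc hQmono
    refine Integrable.mono' (g := fun _ => C) ?_ hmeas.aestronglyMeasurable ?_
    · exact integrableOn_const (by simp)
    · rw [ae_restrict_iff' measurableSet_Ioc]
      refine Filter.Eventually.of_forall fun p hp => ?_
      have h1 := hQle p (lt_of_le_of_lt hα0 hp.1) hp.2
      have h2 := hQge p (lt_of_le_of_lt hα0 hp.1) hp.2
      rw [Real.norm_eq_abs, abs_le]
      exact ⟨by linarith, h1⟩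
  -- the positive part function g = (L - q)⁺
  set g : Ω → ℝ := fun ω => max (L ω - q) 0 with hg
  have hLint : Integrable L P := hLbdd.integrable le_top
  have hgint : Integrable g P := (hLint.sub (integrable_const q)).pos_part
  have hPgt : ∀ s : ℝ, (P {ω | s < L ω}).toReal = 1 - F s := by
    intro s
    have hcompl : {ω | s < L ω} = {ω | L ω ≤ s}ᶜ := by
      ext ω; simp [not_le]
    rw [hcompl, measure_compl (hmeas_le s) (measure_ne_top _ _), measure_univ,
      ENNReal.toReal_sub_of_le prob_le_one ENNReal.one_ne_top, ENNReal.toReal_one, hFdef]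
  -- layer cake for g
  have hlay1 : ∫ ω, g ω ∂P = ∫ t in Ioi (0:ℝ), (1 - F (q + t)) := by
    rw [hgint.integral_eq_integral_meas_lt (Filter.Eventually.of_forall fun ω => le_max_right _ _)]
    refine setIntegral_congr_fun measurableSet_Ioi fun t ht => ?_
    have hset : {ω | t < g ω} = {ω | q + t < L ω} := by
      ext ω
      simp only [hg, mem_setOf_eq, lt_max_iff]
      constructor
      · rintro (h | h)
        · linarith
        · exact absurd ht (by simp only [mem_Ioi]; linarith)
      · intro h; left; linarith
    rw [hset]; exact hPgt _
  -- layer cake for the quantile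
  have hlay2 : ∫ p in Ioc α 1, (quantileRV P L p - q) = ∫ t in Ioi (0:ℝ), (1 - F (q + t)) := by
    have hfint : IntegrableOn (fun p => quantileRV P L p - q) (Ioc α 1) volume :=
      hQint.sub (integrableOn_const (by simp))
    have hfnn : 0 ≤ᵐ[volume.restrict (Ioc α 1)] fun p => quantileRV P L p - q := by
      have h := (ae_restrict_iff' (μ := volume) (p := fun p => 0 ≤ quantileRV P L p - q)
        measurableSet_Ioc).mpr
        (Filter.Eventually.of_forall fun p hp => sub_nonneg.mpr (hQq p hp.1 hp.2))
      filter_upwards [h] with p hp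
      exact hp
    rw [hfint.integral_eq_integral_meas_lt hfnn]
    refine setIntegral_congr_fun measurableSet_Ioi fun t ht => ?_
    simp only [mem_Ioi] at ht
    have hFqt_ge : α ≤ F (q + t) := le_trans hFq (hF_mono (by linarith))
    have hset : {p | t < quantileRV P L p - q} ∩ Ioc α 1 = Ioc (F (q + t)) 1 := by
      ext p
      simp only [mem_inter_iff, mem_setOf_eq, mem_Ioc]
      constructor
      · rintro ⟨hp1, hp2, hp3⟩
        refine ⟨?_, hp3⟩
        by_contra hcon
        push_neg at hcon
        have := (hgalois p (q + t) (lt_of_le_of_lt hα0 hp2) hp3).mpr hcon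
        linarith
      · rintro ⟨hp1, hp2⟩
        have hp0 : α < p := lt_of_le_of_lt hFqt_ge hp1
        refine ⟨?_, hp0, hp2⟩
        have : ¬ (quantileRV P L p ≤ q + t) := by
          rw [hgalois p (q + t) (lt_of_le_of_lt hα0 hp0) hp2]
          linarith
        push_neg at this
        linarith
    rw [measureReal_restrict_apply' measurableSet_Ioc, hset,
      Real.volume_real_Ioc_of_le (hF_le_one (q + t))]
  -- the key identity
  have hconst_int : IntegrableOn (fun _ : ℝ => q) (Ioc α 1) volume :=
    integrableOn_const (by simp)
  have hkey : ∫ p in α..1, quantileRV P L p = (∫ ω, g ω ∂P) + (1 - α) * q := by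
    rw [intervalIntegral.integral_of_le hα1.le]
    have h1 : ∫ p in Ioc α 1, quantileRV P L p =
        ∫ p in Ioc α 1, ((quantileRV P L p - q) + q) := by
      congr 1; funext p; ring
    have h4 : ∫ p in Ioc α 1, (quantileRV P L p - q) =
        (∫ p in Ioc α 1, quantileRV P L p) - ∫ _ in Ioc α 1, q :=
      integral_sub hQint hconst_int
    have h5 : ∫ _ in Ioc α 1, q = (1 - α) * q := by
      rw [setIntegral_const, Real.volume_real_Ioc_of_le hα1.le, smul_eq_mul]
    linarith [hlay2, hlay1, h4, h5]
  have hCTE_eq : CTE P L α = c * (∫ ω, g ω ∂P) + q := by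
    show (1 - α)⁻¹ * _ = _
    rw [hkey, ← hc]
    linear_combination q * hc1
  -- upper bound
  have hub : ∀ r ∈ {r : ℝ | ∃ Z : Ω → ℝ, Integrable Z P ∧ (∫ ω, Z ω ∂P) = 1 ∧
      (∀ᵐ ω ∂P, 0 ≤ Z ω) ∧ (∀ᵐ ω ∂P, (1 - α) * Z ω ≤ 1) ∧
      r = ∫ ω, L ω * Z ω ∂P}, r ≤ CTE P L α := by
    rintro r ⟨Z, hZint, hZ1, hZnn, hZle1, rfl⟩
    have hZlec : ∀ᵐ ω ∂P, Z ω ≤ c := by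
      filter_upwards [hZle1] with ω hω
      nlinarith [hω, hc1, hαlt]
    have hint_LqZ : Integrable (fun ω => (L ω - q) * Z ω) P := by
      refine hZint.bdd_mul (c := C + |q|) (hL.sub measurable_const).aestronglyMeasurable ?_
      filter_upwards [hCae] with ω h
      rw [Real.norm_eq_abs]
      have h1 : |L ω - q| ≤ |L ω| + |q| := by
        rw [sub_eq_add_neg]
        exact (abs_add_le _ _).trans_eq (by rw [abs_neg])
      linarith
    have hptw : (fun ω => (L ω - q) * Z ω) ≤ᵐ[P] fun ω => c * g ω := by
      filter_upwards [hZnn, hZlec] with ω h0 h1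
      rcases le_or_gt (L ω - q) 0 with h | h
      · have h2 : (L ω - q) * Z ω ≤ 0 := mul_nonpos_of_nonpos_of_nonneg h h0
        have h3 : 0 ≤ c * g ω := mul_nonneg hc_pos.le (le_max_right _ _)
        linarith
      · have hgω : g ω = L ω - q := max_eq_left h.le
        calc (L ω - q) * Z ω ≤ (L ω - q) * c := mul_le_mul_of_nonneg_left h1 h.le
          _ = c * g ω := by rw [hgω]; ring
    have hdecomp : ∫ ω, L ω * Z ω ∂P = (∫ ω, (L ω - q) * Z ω ∂P) + q := by
      have h1 : (fun ω => L ω * Z ω) = fun ω => (L ω - q) * Z ω + q * Z ω := by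
        funext ω; ring
      rw [h1, integral_add hint_LqZ (hZint.const_mul q), integral_const_mul, hZ1, mul_one]
    have hmono := integral_mono_ae hint_LqZ (hgint.const_mul c) hptw
    rw [integral_const_mul] at hmono
    rw [hdecomp, hCTE_eq]
    linarith
  -- the optimal Z
  set A1 : Set Ω := {ω | q < L ω} with hA1
  set A2 : Set Ω := {ω | L ω = q} with hA2
  have hA1m : MeasurableSet A1 := hL measurableSet_Ioi
  have hA2m : MeasurableSet A2 := hL (measurableSet_singleton q)
  set a : ℝ := (P A1).toReal with ha
  set b : ℝ := (P A2).toReal with hb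
  have hb0 : 0 ≤ b := ENNReal.toReal_nonneg
  have ha_eq : a = 1 - F q := hPgt q
  have hca_le : c * a ≤ 1 := by
    have h1 : a ≤ 1 - α := by rw [ha_eq]; linarith
    have h2 : c * a ≤ c * (1 - α) := mul_le_mul_of_nonneg_left h1 hc_pos.le
    linarith [hc1]
  have hdisj : Disjoint A1 A2 := by
    rw [Set.disjoint_left]
    intro ω h1 h2
    simp only [hA1, hA2, mem_setOf_eq] at h1 h2
    linarith [h2 ▸ h1]
  have hab : 1 - α ≤ a + b := by
    have hunion : A1 ∪ A2 = {ω | L ω < q}ᶜ := by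
      ext ω
      simp only [hA1, hA2, mem_union, mem_setOf_eq, mem_compl_iff, not_lt]
      constructor
      · rintro (h | h)
        · exact h.le
        · exact h.ge
      · intro h
        rcases lt_or_eq_of_le h with h' | h'
        · exact Or.inl h'
        · exact Or.inr h'.symm
    have h1 : P A1 + P A2 = P ({ω | L ω < q}ᶜ) := by
      rw [← hunion, measure_union hdisj hA2m]
    have hmeas_lt : MeasurableSet {ω | L ω < q} := hL measurableSet_Iio
    have h2 : (P ({ω | L ω < q}ᶜ)).toReal = 1 - (P {ω | L ω < q}).toReal := by
      rw [measure_compl hmeas_lt (measure_ne_top _ _), measure_univ,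
        ENNReal.toReal_sub_of_le prob_le_one ENNReal.one_ne_top, ENNReal.toReal_one]
    have h3 : a + b = 1 - (P {ω | L ω < q}).toReal := by
      rw [ha, hb, ← ENNReal.toReal_add (measure_ne_top _ _) (measure_ne_top _ _), h1, h2]
    rw [h3]
    linarith [hlt_q]
  set β : ℝ := if b = 0 then 0 else (1 - c * a) / b with hβ
  have hβ0 : 0 ≤ β := by
    rw [hβ]
    split_ifs with h
    · exact le_refl 0
    · exact div_nonneg (by linarith) hb0
  have hβc : β ≤ c := by
    rw [hβ]
    split_ifs with h
    · exact hc_pos.le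
    · have hbpos : 0 < b := lt_of_le_of_ne hb0 (Ne.symm h)
      rw [div_le_iff₀ hbpos]
      have h2 : c * (1 - α) ≤ c * (a + b) := mul_le_mul_of_nonneg_left hab hc_pos.le
      nlinarith [hc1]
  have hβsum : c * a + β * b = 1 := by
    rw [hβ]
    split_ifs with h
    · have h2 : c * (1 - α) ≤ c * (a + b) := mul_le_mul_of_nonneg_left hab hc_pos.le
      rw [h] at h2
      nlinarith [hc1, hca_le]
    · rw [div_mul_cancel₀ _ h]
      ring
  set Z : Ω → ℝ := fun ω => A1.indicator (fun _ => c) ω + A2.indicator (fun _ => β) ω with hZ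
  have hZint : Integrable Z P :=
    ((integrable_const c).indicator hA1m).add ((integrable_const β).indicator hA2m)
  have hZ1 : (∫ ω, Z ω ∂P) = 1 := by
    rw [hZ]
    rw [integral_add ((integrable_const c).indicator hA1m) ((integrable_const β).indicator hA2m),
      integral_indicator_const c hA1m, integral_indicator_const β hA2m, smul_eq_mul, smul_eq_mul,
      measureReal_def, measureReal_def, ← ha, ← hb]
    rw [← hβsum]; ring
  have hZnn : ∀ ω, 0 ≤ Z ω := fun ω =>
    add_nonneg (Set.indicator_nonneg (fun _ _ => hc_pos.le) ω)
      (Set.indicator_nonneg (fun _ _ => hβ0) ω)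
  have hZlec : ∀ ω, Z ω ≤ c := by
    intro ω
    rw [hZ]
    by_cases h1 : ω ∈ A1
    · have h2 : ω ∉ A2 := fun h2 => by
        simp only [hA1, hA2, mem_setOf_eq] at h1 h2
        linarith [h2 ▸ h1]
      simp [Set.indicator_of_mem h1, Set.indicator_of_notMem h2]
    · by_cases h2 : ω ∈ A2
      · simp only [Set.indicator_of_notMem h1, Set.indicator_of_mem h2, zero_add]
        exact hβc
      · simp [Set.indicator_of_notMem h1, Set.indicator_of_notMem h2, hc_pos.le]
  -- g as an indicator
  have hg_ind : g = A1.indicator (fun ω => L ω - q) := by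
    funext ω
    by_cases hω : ω ∈ A1
    · rw [Set.indicator_of_mem hω]
      refine max_eq_left ?_
      simp only [hA1, mem_setOf_eq] at hω
      linarith
    · rw [Set.indicator_of_notMem hω]
      refine max_eq_right ?_
      simp only [hA1, mem_setOf_eq, not_lt] at hω
      linarith
  have hm_eq : ∫ ω, g ω ∂P = (∫ ω in A1, L ω ∂P) - q * a := by
    rw [hg_ind, integral_indicator hA1m,
      integral_sub hLint.integrableOn (integrableOn_const (measure_ne_top _ _)),
      setIntegral_const, smul_eq_mul, measureReal_def, ← ha]
    ring
  have hLZ_eq : (fun ω => L ω * Z ω) =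
      fun ω => A1.indicator (fun ω' => c * L ω') ω + A2.indicator (fun _ => β * q) ω := by
    funext ω
    rw [hZ]
    by_cases h1 : ω ∈ A1
    · have h2 : ω ∉ A2 := fun h2 => by
        simp only [hA1, hA2, mem_setOf_eq] at h1 h2
        linarith [h2 ▸ h1]
      simp only [Set.indicator_of_mem h1, Set.indicator_of_notMem h2, add_zero, mul_zero]
      ring
    · by_cases h2 : ω ∈ A2
      · simp only [Set.indicator_of_notMem h1, Set.indicator_of_mem h2, zero_add]
        simp only [hA2, mem_setOf_eq] at h2
        rw [h2]; ring
      · simp [Set.indicator_of_notMem h1, Set.indicator_of_notMem h2]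
  have hint1 : Integrable (fun ω => A1.indicator (fun ω' => c * L ω') ω) P := by
    rw [integrable_indicator_iff hA1m]
    exact ((hLint.const_mul c).integrableOn)
  have hint2 : Integrable (fun ω => A2.indicator (fun _ : Ω => β * q) ω) P :=
    (integrable_const (β * q)).indicator hA2m
  have hLZ_int : ∫ ω, L ω * Z ω ∂P = c * (∫ ω, g ω ∂P) + q := by
    rw [hLZ_eq, integral_add hint1 hint2, integral_indicator hA1m,
      integral_indicator_const (β * q) hA2m, smul_eq_mul, measureReal_def, ← hb]
    have h3 : ∫ ω in A1, c * L ω ∂P = c * ∫ ω in A1, L ω ∂P := integral_const_mul c _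
    rw [h3, hm_eq]
    have : q * (c * a + β * b) = q := by rw [hβsum]; ring
    linarith [this]
  have hmem : CTE P L α ∈ {r : ℝ | ∃ Z : Ω → ℝ, Integrable Z P ∧ (∫ ω, Z ω ∂P) = 1 ∧
      (∀ᵐ ω ∂P, 0 ≤ Z ω) ∧ (∀ᵐ ω ∂P, (1 - α) * Z ω ≤ 1) ∧
      r = ∫ ω, L ω * Z ω ∂P} := by
    refine ⟨Z, hZint, hZ1, Filter.Eventually.of_forall hZnn, ?_, ?_⟩
    · refine Filter.Eventually.of_forall fun ω => ?_
      have h1 : (1 - α) * Z ω ≤ (1 - α) * c := mul_le_mul_of_nonneg_left (hZlec ω) hαlt.le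
      have h2 : (1 - α) * c = 1 := by rw [mul_comm]; exact hc1
      linarith
    · rw [hLZ_int, hCTE_eq]
  exact IsGreatest.isLUB ⟨hmem, hub⟩
end

section
/- Let (Ω, F, P) be an atomless probability space, σ a bounded, right-continuous distortion, and L an essentially bounded real random variable. Then π_σ(L) = inf{ E[h(L)] : h : ℝ → ℝ Borel measurable with ∫₀¹ h*(σ(p)) dp ≤ 0 }. -/
open MeasureTheory Set
open scoped ENNReal

/-- The convex conjugate `h*(y) = sup_x (x·y − h(x))`, with values in `EReal`
(it may take the value `+∞`). -/
noncomputable def convexConj (h : ℝ → ℝ) (y : ℝ) : EReal :=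
  ⨆ x : ℝ, ((x * y - h x : ℝ) : EReal)

section AuxS16

open ProbabilityTheory Filter
open scoped Topology

namespace S16

/-- quantile function of a measure on ℝ -/
noncomputable def qf (μ : Measure ℝ) (u : ℝ) : ℝ := sInf {x | u ≤ cdf μ x}

variable {μ : Measure ℝ} [IsProbabilityMeasure μ] {C : ℝ}

lemma cdf_of_ae_bound (hC : ∀ᵐ x ∂μ, |x| ≤ C) : cdf μ C = 1 := by
  have h0 : μ (Iic C)ᶜ = 0 := by
    refine measure_mono_null ?_ (ae_iff.mp hC)
    intro x hx
    simp only [mem_compl_iff, mem_Iic, not_le] at hx ⊢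
    simp only [mem_setOf_eq, not_le]
    calc C < x := hx
    _ ≤ |x| := le_abs_self x
  have h1 : μ (Iic C) = 1 := (prob_compl_eq_zero_iff measurableSet_Iic).mp h0
  rw [cdf_eq_real, measureReal_def, h1]; simp

lemma cdf_zero_of_lt (hC : ∀ᵐ x ∂μ, |x| ≤ C) {x : ℝ} (hx : x < -C) : cdf μ x = 0 := by
  have h0 : μ (Iic x) = 0 := by
    refine measure_mono_null ?_ (ae_iff.mp hC)
    intro y hy
    simp only [mem_Iic] at hy
    simp only [mem_setOf_eq, not_le]
    have : y < -C := lt_of_le_of_lt hy hx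
    calc C < -y := by linarith
    _ ≤ |y| := neg_le_abs y
  rw [cdf_eq_real, measureReal_def, h0]; simp

lemma mem_qSet (hC : ∀ᵐ x ∂μ, |x| ≤ C) {u : ℝ} (hu1 : u ≤ 1) :
    C ∈ {x | u ≤ cdf μ x} := by
  simp only [mem_setOf_eq, cdf_of_ae_bound hC]; exact hu1

lemma qSet_nonempty (hC : ∀ᵐ x ∂μ, |x| ≤ C) {u : ℝ} (hu1 : u ≤ 1) :
    ({x | u ≤ cdf μ x}).Nonempty := ⟨C, mem_qSet hC hu1⟩

lemma qSet_subset (hC : ∀ᵐ x ∂μ, |x| ≤ C) {u : ℝ} (hu : 0 < u) :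
    {x | u ≤ cdf μ x} ⊆ Ici (-C) := by
  intro y hy
  simp only [mem_setOf_eq] at hy
  by_contra hcon
  simp only [mem_Ici, not_le] at hcon
  rw [cdf_zero_of_lt hC hcon] at hy
  linarith

lemma qSet_bddBelow (hC : ∀ᵐ x ∂μ, |x| ≤ C) {u : ℝ} (hu : 0 < u) :
    BddBelow {x | u ≤ cdf μ x} := ⟨-C, fun y hy => qSet_subset hC hu hy⟩

lemma qf_le_C (hC : ∀ᵐ x ∂μ, |x| ≤ C) {u : ℝ} (hu : 0 < u) (hu1 : u ≤ 1) :
    qf μ u ≤ C := csInf_le (qSet_bddBelow hC hu) (mem_qSet hC hu1)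

lemma neg_C_le_qf (hC : ∀ᵐ x ∂μ, |x| ≤ C) {u : ℝ} (hu : 0 < u) (hu1 : u ≤ 1) :
    -C ≤ qf μ u := le_csInf (qSet_nonempty hC hu1) (fun y hy => qSet_subset hC hu hy)

lemma le_cdf_qf (hC : ∀ᵐ x ∂μ, |x| ≤ C) {u : ℝ} (hu : 0 < u) (hu1 : u ≤ 1) :
    u ≤ cdf μ (qf μ u) := by
  have hne := qSet_nonempty hC (μ := μ) hu1
  have hbdd := qSet_bddBelow hC (μ := μ) hu
  have htendsto : Tendsto (cdf μ) (𝓝[>] (qf μ u)) (𝓝 (cdf μ (qf μ u))) :=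
    ((cdf μ).right_continuous (qf μ u)).mono Ioi_subset_Ici_self
  refine ge_of_tendsto htendsto ?_
  filter_upwards [eventually_mem_nhdsWithin] with x hx
  obtain ⟨y, hy, hyx⟩ := exists_lt_of_csInf_lt hne hx
  exact le_trans hy ((monotone_cdf μ) hyx.le)

lemma qf_le_iff (hC : ∀ᵐ x ∂μ, |x| ≤ C) {u x : ℝ} (hu : 0 < u) (hu1 : u ≤ 1) :
    qf μ u ≤ x ↔ u ≤ cdf μ x := by
  constructor
  · intro h
    exact le_trans (le_cdf_qf hC hu hu1) ((monotone_cdf μ) h)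
  · intro h
    exact csInf_le (qSet_bddBelow hC hu) h

lemma qf_monotoneOn (hC : ∀ᵐ x ∂μ, |x| ≤ C) : MonotoneOn (qf μ) (Ioo (0:ℝ) 1) := by
  intro u hu v hv huv
  exact csInf_le_csInf (qSet_bddBelow hC hu.1) (qSet_nonempty hC hv.2.le)
    (fun x hx => le_trans huv hx)

lemma qf_aemeasurable (hC : ∀ᵐ x ∂μ, |x| ≤ C) :
    AEMeasurable (qf μ) (volume.restrict (Ioo (0:ℝ) 1)) :=
  aemeasurable_restrict_of_monotoneOn measurableSet_Ioo (qf_monotoneOn hC)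

lemma map_qf (hC : ∀ᵐ x ∂μ, |x| ≤ C) :
    Measure.map (qf μ) (volume.restrict (Ioo (0:ℝ) 1)) = μ := by
  haveI : IsProbabilityMeasure (volume.restrict (Ioo (0:ℝ) 1)) := by
    constructor
    rw [Measure.restrict_apply_univ, Real.volume_Ioo]
    norm_num
  refine Measure.ext_of_Iic _ μ (fun x => ?_)
  rw [Measure.map_apply_of_aemeasurable (qf_aemeasurable hC) measurableSet_Iic,
    Measure.restrict_apply' measurableSet_Ioo]
  have hset : qf μ ⁻¹' Iic x ∩ Ioo 0 1 = Iic (cdf μ x) ∩ Ioo 0 1 := by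
    ext u
    simp only [mem_inter_iff, mem_preimage, mem_Iic, mem_Ioo, and_congr_left_iff]
    intro hu
    rw [qf_le_iff hC hu.1 hu.2.le]
  rw [hset, ← ofReal_cdf μ x]
  have h0 : (0:ℝ) ≤ cdf μ x := cdf_nonneg μ x
  have h1 : cdf μ x ≤ 1 := cdf_le_one μ x
  rcases lt_or_eq_of_le h1 with h1' | h1'
  · have : Iic (cdf μ x) ∩ Ioo (0:ℝ) 1 = Ioc 0 (cdf μ x) := by
      ext u
      simp only [mem_inter_iff, mem_Iic, mem_Ioo, mem_Ioc]
      constructor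
      · rintro ⟨h, h2, _⟩; exact ⟨h2, h⟩
      · rintro ⟨h2, h⟩; exact ⟨h, h2, lt_of_le_of_lt h h1'⟩
    rw [this, Real.volume_Ioc, sub_zero]
  · have : Iic (cdf μ x) ∩ Ioo (0:ℝ) 1 = Ioo 0 1 := by
      ext u
      simp only [mem_inter_iff, mem_Iic, mem_Ioo]
      refine ⟨fun h => h.2, fun h => ⟨?_, h⟩⟩
      rw [h1']; exact h.2.le
    rw [this, Real.volume_Ioo, sub_zero, h1']

/-- base convex function `h₀(x) = ∫₀ˣ σ(F(t)) dt` -/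
noncomputable def hbase (μ : Measure ℝ) (σ : ℝ → ℝ) (x : ℝ) : ℝ :=
  ∫ t in (0:ℝ)..x, σ (cdf μ t)

variable {σ : ℝ → ℝ}

lemma sBase_monotone (hσ_mono : MonotoneOn σ (Icc (0:ℝ) 1)) :
    Monotone (fun t => σ (cdf μ t)) := fun a b hab =>
  hσ_mono ⟨cdf_nonneg μ a, cdf_le_one μ a⟩ ⟨cdf_nonneg μ b, cdf_le_one μ b⟩
    ((monotone_cdf μ) hab)

lemma sBase_intInt (hσ_mono : MonotoneOn σ (Icc (0:ℝ) 1)) (a b : ℝ) :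
    IntervalIntegrable (fun t => σ (cdf μ t)) volume a b :=
  (sBase_monotone hσ_mono).intervalIntegrable

lemma hbase_sub (hσ_mono : MonotoneOn σ (Icc (0:ℝ) 1)) (a b : ℝ) :
    hbase μ σ b - hbase μ σ a = ∫ t in a..b, σ (cdf μ t) :=
  intervalIntegral.integral_interval_sub_left (sBase_intInt hσ_mono 0 b)
    (sBase_intInt hσ_mono 0 a)

lemma hbase_abs_le {B : ℝ} (hσ_nonneg : ∀ u ∈ Icc (0:ℝ) 1, 0 ≤ σ u)
    (hσ_mono : MonotoneOn σ (Icc (0:ℝ) 1))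
    (hB : B ∈ upperBounds (σ '' Icc (0:ℝ) 1)) (x : ℝ) :
    |hbase μ σ x| ≤ B * |x| := by
  have h0 : hbase μ σ 0 = 0 := intervalIntegral.integral_same
  have := hbase_sub (μ := μ) hσ_mono 0 x
  rw [h0, sub_zero] at this
  rw [this, ← Real.norm_eq_abs]
  have := intervalIntegral.norm_integral_le_of_norm_le_const
    (a := 0) (b := x) (C := B) (f := fun t => σ (cdf μ t)) (fun t _ => by
      have h1 : (0:ℝ) ≤ σ (cdf μ t) := hσ_nonneg _ ⟨cdf_nonneg μ t, cdf_le_one μ t⟩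
      have h2 : σ (cdf μ t) ≤ B := hB ⟨cdf μ t, ⟨cdf_nonneg μ t, cdf_le_one μ t⟩, rfl⟩
      rw [Real.norm_eq_abs, abs_of_nonneg h1]; exact h2)
  simpa using this

lemma hbase_dist {B : ℝ} (hσ_nonneg : ∀ u ∈ Icc (0:ℝ) 1, 0 ≤ σ u)
    (hσ_mono : MonotoneOn σ (Icc (0:ℝ) 1))
    (hB : B ∈ upperBounds (σ '' Icc (0:ℝ) 1)) (x y : ℝ) :
    |hbase μ σ x - hbase μ σ y| ≤ B * |x - y| := by
  rw [hbase_sub hσ_mono y x, ← Real.norm_eq_abs]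
  have := intervalIntegral.norm_integral_le_of_norm_le_const
    (a := y) (b := x) (C := B) (f := fun t => σ (cdf μ t)) (fun t _ => by
      have h1 : (0:ℝ) ≤ σ (cdf μ t) := hσ_nonneg _ ⟨cdf_nonneg μ t, cdf_le_one μ t⟩
      have h2 : σ (cdf μ t) ≤ B := hB ⟨cdf μ t, ⟨cdf_nonneg μ t, cdf_le_one μ t⟩, rfl⟩
      rw [Real.norm_eq_abs, abs_of_nonneg h1]; exact h2)
  calc ‖∫ t in y..x, σ (cdf μ t)‖ ≤ B * |x - y| := this
  _ = B * |x - y| := rfl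

lemma hbase_continuous {B : ℝ} (hσ_nonneg : ∀ u ∈ Icc (0:ℝ) 1, 0 ≤ σ u)
    (hσ_mono : MonotoneOn σ (Icc (0:ℝ) 1))
    (hB : B ∈ upperBounds (σ '' Icc (0:ℝ) 1)) :
    Continuous (hbase μ σ) := by
  have hB0 : 0 ≤ B := le_trans (hσ_nonneg 1 ⟨zero_le_one, le_rfl⟩)
    (hB ⟨1, ⟨zero_le_one, le_rfl⟩, rfl⟩)
  have : LipschitzWith (Real.toNNReal B) (hbase μ σ) := by
    refine LipschitzWith.of_dist_le_mul (fun x y => ?_)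
    rw [Real.dist_eq, Real.dist_eq, Real.coe_toNNReal B hB0]
    exact hbase_dist hσ_nonneg hσ_mono hB x y
  exact this.continuous

/-- the key subgradient inequality: `σ(u) ∈ ∂h₀(q(u))` for `u ∈ (0,1)`. -/
lemma subgrad (hC : ∀ᵐ x ∂μ, |x| ≤ C)
    (hσ_mono : MonotoneOn σ (Icc (0:ℝ) 1))
    {u : ℝ} (hu : u ∈ Ioo (0:ℝ) 1) (x : ℝ) :
    σ u * (x - qf μ u) ≤ hbase μ σ x - hbase μ σ (qf μ u) := by
  set Q := qf μ u with hQ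
  have hFQ : u ≤ cdf μ Q := le_cdf_qf hC hu.1 hu.2.le
  have memu : u ∈ Icc (0:ℝ) 1 := ⟨hu.1.le, hu.2.le⟩
  have memF : ∀ t, cdf μ t ∈ Icc (0:ℝ) 1 := fun t => ⟨cdf_nonneg μ t, cdf_le_one μ t⟩
  rcases le_total Q x with hqx | hxq
  · rw [hbase_sub hσ_mono]
    have hpt : ∀ t ∈ Icc Q x, σ u ≤ σ (cdf μ t) := fun t ht =>
      hσ_mono memu (memF t) (hFQ.trans ((monotone_cdf μ) ht.1))
    calc σ u * (x - Q) = ∫ _ in Q..x, σ u := by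
          rw [intervalIntegral.integral_const, smul_eq_mul, mul_comm]
    _ ≤ ∫ t in Q..x, σ (cdf μ t) :=
          intervalIntegral.integral_mono_on hqx intervalIntegrable_const
            (sBase_intInt hσ_mono Q x) hpt
  · have key : (∫ t in x..Q, σ (cdf μ t)) ≤ σ u * (Q - x) := by
      have hae : ∀ᵐ t ∂(volume.restrict (Icc x Q)), σ (cdf μ t) ≤ σ u := by
        have h1 : ∀ᵐ t ∂(volume.restrict (Icc x Q)), t ∈ Icc x Q :=
          ae_restrict_mem measurableSet_Icc
        have h2 : ∀ᵐ t ∂(volume.restrict (Icc x Q)), t ≠ Q := by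
          refine ae_restrict_of_ae ?_
          rw [ae_iff]
          have : {t : ℝ | ¬ t ≠ Q} = {Q} := by ext t; simp [not_not]
          rw [this]
          exact Real.volume_singleton
        filter_upwards [h1, h2] with t ht htne
        have htQ : t < Q := lt_of_le_of_ne ht.2 htne
        have hFt : cdf μ t < u := by
          by_contra hcon
          push_neg at hcon
          have : Q ≤ t := csInf_le (qSet_bddBelow hC hu.1) hcon
          linarith
        exact hσ_mono (memF t) memu hFt.le
      calc (∫ t in x..Q, σ (cdf μ t)) ≤ ∫ _ in x..Q, σ u :=
            intervalIntegral.integral_mono_ae_restrict hxq (sBase_intInt hσ_mono x Q)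
              intervalIntegrable_const hae
      _ = σ u * (Q - x) := by
            rw [intervalIntegral.integral_const, smul_eq_mul, mul_comm]
    have := hbase_sub (μ := μ) hσ_mono x Q
    linarith

/-- exact value of the convex conjugate of `h₀ + c` at `σ(u)`. -/
lemma conj_eq (hC : ∀ᵐ x ∂μ, |x| ≤ C)
    (hσ_mono : MonotoneOn σ (Icc (0:ℝ) 1))
    (c : ℝ) {u : ℝ} (hu : u ∈ Ioo (0:ℝ) 1) :
    convexConj (fun x => hbase μ σ x + c) (σ u)
      = ((qf μ u * σ u - hbase μ σ (qf μ u) - c : ℝ) : EReal) := by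
  apply le_antisymm
  · refine iSup_le (fun x => ?_)
    refine EReal.coe_le_coe_iff.2 ?_
    have h1 := subgrad hC hσ_mono hu x
    have h2 : σ u * (x - qf μ u) = x * σ u - qf μ u * σ u := by ring
    simp only []
    linarith
  · have hle := le_iSup (fun x : ℝ =>
      ((x * σ u - (hbase μ σ x + c) : ℝ) : EReal)) (qf μ u)
    refine le_trans (le_of_eq ?_) hle
    norm_cast
    ring

end S16


end AuxS16

/-- on an atomless probability space, for a bounded right-continuous distortion
`σ` and an essentially bounded `L`,
`π_σ(L) = inf { E[h(L)] : h Borel measurable with ∫₀¹ h*(σ(p)) dp ≤ 0 }`. -/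
theorem statement_16 {Ω : Type*} [MeasurableSpace Ω] (P : Measure Ω) [IsProbabilityMeasure P]
    (hatomless : AtomlessMeasure P)
    (σ : ℝ → ℝ)
    (hσ_nonneg : ∀ u ∈ Icc (0:ℝ) 1, 0 ≤ σ u)
    (hσ_mono : MonotoneOn σ (Icc (0:ℝ) 1))
    (hσ_bdd : BddAbove (σ '' Icc (0:ℝ) 1))
    (hσ_rc : ∀ p ∈ Ico (0:ℝ) 1, ContinuousWithinAt σ (Ici p) p)
    (hσ_int : ∫ u in (0:ℝ)..1, σ u = 1)
    (L : Ω → ℝ) (hL : Measurable L) (hLbdd : MemLp L ⊤ P) :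
    IsGLB {r : ℝ | ∃ h : ℝ → ℝ, Measurable h ∧ Integrable (fun ω => h (L ω)) P ∧
        (∃ g : ℝ → ℝ,
          (∀ᵐ p ∂(volume.restrict (Icc (0:ℝ) 1)), convexConj h (σ p) = ((g p : ℝ) : EReal)) ∧
          IntervalIntegrable g volume 0 1 ∧
          (∫ p in (0:ℝ)..1, g p) ≤ 0) ∧
        r = ∫ ω, h (L ω) ∂P}
      (distortedPremium P L σ) := by
  classical
  -- essential bound on L
  have hTop : eLpNorm L ⊤ P < ⊤ := hLbdd.2
  rw [eLpNorm_exponent_top] at hTop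
  set C : ℝ := (eLpNormEssSup L P).toReal with hCdef
  have hC0 : 0 ≤ C := ENNReal.toReal_nonneg
  have hCae : ∀ᵐ ω ∂P, |L ω| ≤ C := by
    filter_upwards [ae_le_eLpNormEssSup (f := L) (μ := P)] with ω hω
    have h2 := ENNReal.toReal_mono hTop.ne hω
    simpa [← Real.norm_eq_abs] using h2
  set μ : Measure ℝ := P.map L with hμdef
  haveI hPμ : IsProbabilityMeasure μ := Measure.isProbabilityMeasure_map hL.aemeasurable
  have hCμ : ∀ᵐ x ∂μ, |x| ≤ C := by
    rw [hμdef, MeasureTheory.ae_map_iff hL.aemeasurable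
      ((isClosed_le continuous_abs continuous_const).measurableSet :
        MeasurableSet {x : ℝ | |x| ≤ C})]
    exact hCae
  -- identify quantileRV with S16.qf
  have hcdf_eq : ∀ x, cdfRV P L x = ProbabilityTheory.cdf μ x := by
    intro x
    rw [ProbabilityTheory.cdf_eq_real, measureReal_def]
    unfold cdfRV
    congr 1
    rw [hμdef, Measure.map_apply hL measurableSet_Iic]
    rfl
  set q : ℝ → ℝ := S16.qf μ with hqdef
  have hquant : quantileRV P L = q := by
    funext u
    rw [hqdef]
    unfold quantileRV S16.qf
    congr 1
    ext x
    simp only [mem_setOf_eq, hcdf_eq]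
  set ν : Measure ℝ := volume.restrict (Ioo (0:ℝ) 1) with hνdef
  haveI hνprob : IsProbabilityMeasure ν := by
    constructor
    rw [hνdef, Measure.restrict_apply_univ, Real.volume_Ioo]
    norm_num
  have haeq : AEMeasurable q ν := S16.qf_aemeasurable hCμ
  have hmap : Measure.map q ν = μ := S16.map_qf hCμ
  obtain ⟨B, hB⟩ := hσ_bdd
  have hB0 : 0 ≤ B := le_trans (hσ_nonneg 1 ⟨zero_le_one, le_rfl⟩)
    (hB ⟨1, ⟨zero_le_one, le_rfl⟩, rfl⟩)
  have hq_mem : ∀ᵐ u ∂ν, u ∈ Ioo (0:ℝ) 1 := ae_restrict_mem measurableSet_Ioo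
  have hq_bdd : ∀ᵐ u ∂ν, |q u| ≤ C := by
    filter_upwards [hq_mem] with u hu
    exact abs_le.2 ⟨S16.neg_C_le_qf hCμ hu.1 hu.2.le, S16.qf_le_C hCμ hu.1 hu.2.le⟩
  have hσ_aem : AEMeasurable σ ν := by
    have h1 := aemeasurable_restrict_of_monotoneOn (μ := volume) measurableSet_Icc hσ_mono
    exact h1.mono_measure (by rw [hνdef]; exact Measure.restrict_mono Ioo_subset_Icc_self le_rfl)
  have hσ_bdd' : ∀ᵐ u ∂ν, |σ u| ≤ B := by
    filter_upwards [hq_mem] with u hu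
    rw [abs_of_nonneg (hσ_nonneg u ⟨hu.1.le, hu.2.le⟩)]
    exact hB ⟨u, ⟨hu.1.le, hu.2.le⟩, rfl⟩
  have int_qσ : Integrable (fun u => q u * σ u) ν := by
    refine Integrable.mono' (integrable_const (C * B))
      ((haeq.mul hσ_aem).aestronglyMeasurable) ?_
    filter_upwards [hq_bdd, hσ_bdd'] with u h1 h2
    rw [Real.norm_eq_abs, abs_mul]
    exact mul_le_mul h1 h2 (abs_nonneg _) hC0
  have hbase_cont : Continuous (S16.hbase μ σ) := S16.hbase_continuous hσ_nonneg hσ_mono hB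
  have hbase_meas : Measurable (S16.hbase μ σ) := hbase_cont.measurable
  have int_hq : Integrable (fun u => S16.hbase μ σ (q u)) ν := by
    refine Integrable.mono' (integrable_const (B * C))
      ((hbase_meas.comp_aemeasurable haeq).aestronglyMeasurable) ?_
    filter_upwards [hq_bdd] with u h1
    rw [Real.norm_eq_abs]
    calc |S16.hbase μ σ (q u)| ≤ B * |q u| := S16.hbase_abs_le hσ_nonneg hσ_mono hB _
    _ ≤ B * C := mul_le_mul_of_nonneg_left h1 hB0
  -- transfer of integrals through the quantile transform
  have transfer : ∀ f : ℝ → ℝ, Measurable f → Integrable (fun ω => f (L ω)) P →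
      Integrable (fun u => f (q u)) ν ∧ (∫ ω, f (L ω) ∂P) = ∫ u, f (q u) ∂ν := by
    intro f hf hfi
    have h1 : Integrable f μ := by
      rw [hμdef]
      refine (integrable_map_measure hf.aestronglyMeasurable hL.aemeasurable).2 ?_
      exact hfi
    have h2 : Integrable (fun u => f (q u)) ν := by
      rw [← hmap] at h1
      have := (integrable_map_measure hf.aestronglyMeasurable haeq).1 h1
      exact this
    refine ⟨h2, ?_⟩
    have e1 : (∫ ω, f (L ω) ∂P) = ∫ x, f x ∂μ := by
      rw [hμdef, integral_map hL.aemeasurable hf.aestronglyMeasurable]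
    have e2 : (∫ x, f x ∂μ) = ∫ u, f (q u) ∂ν := by
      rw [← hmap, integral_map haeq hf.aestronglyMeasurable]
    rw [e1, e2]
  have dP_eq : distortedPremium P L σ = ∫ u, q u * σ u ∂ν := by
    unfold distortedPremium
    rw [hquant, intervalIntegral.integral_of_le zero_le_one, hνdef]
    exact (setIntegral_congr_set Ioo_ae_eq_Ioc).symm
  have hIccIoo : volume.restrict (Icc (0:ℝ) 1) = ν := by
    rw [hνdef]
    exact (Measure.restrict_congr_set Ioo_ae_eq_Icc).symm
  constructor
  · -- lower bound part
    rintro r ⟨h, hmeas, hint, ⟨g, hgae, hgint, hgle⟩, rfl⟩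
    rw [hIccIoo] at hgae
    obtain ⟨int_hLq, hEq⟩ := transfer h hmeas hint
    have hg_intOn : Integrable g ν := by
      have h1 := (intervalIntegrable_iff_integrableOn_Ioc_of_le zero_le_one).1 hgint
      have h2 : volume.restrict (Ioo (0:ℝ) 1) = volume.restrict (Ioc (0:ℝ) 1) :=
        Measure.restrict_congr_set Ioo_ae_eq_Ioc
      rw [hνdef, h2]
      exact h1
    have hgint01 : (∫ u, g u ∂ν) = ∫ p in (0:ℝ)..1, g p := by
      rw [intervalIntegral.integral_of_le zero_le_one, hνdef]
      exact setIntegral_congr_set Ioo_ae_eq_Ioc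
    have key : ∀ᵐ p ∂ν, q p * σ p ≤ h (q p) + g p := by
      filter_upwards [hgae] with p hp1
      have h1 : ((q p * σ p - h (q p) : ℝ) : EReal) ≤ convexConj h (σ p) :=
        le_iSup (fun x : ℝ => ((x * σ p - h x : ℝ) : EReal)) (q p)
      rw [hp1] at h1
      have h2 := EReal.coe_le_coe_iff.1 h1
      linarith
    have hmono := integral_mono_ae int_qσ (int_hLq.add hg_intOn) key
    simp only [Pi.add_apply] at hmono
    rw [integral_add int_hLq hg_intOn] at hmono
    rw [dP_eq, hEq]
    have hg0 : (∫ u, g u ∂ν) ≤ 0 := by rw [hgint01]; exact hgle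
    linarith
  · -- the distorted premium belongs to the set
    intro b hb
    apply hb
    set c : ℝ := ∫ u, (q u * σ u - S16.hbase μ σ (q u)) ∂ν with hcdef
    have hmeas' : Measurable (fun x => S16.hbase μ σ x + c) := hbase_meas.add_const c
    have hint' : Integrable (fun ω => S16.hbase μ σ (L ω) + c) P := by
      refine Integrable.mono' (integrable_const (B * C + |c|))
        ((hmeas'.comp hL).aestronglyMeasurable) ?_
      filter_upwards [hCae] with ω hω
      rw [Real.norm_eq_abs]
      calc |S16.hbase μ σ (L ω) + c| ≤ |S16.hbase μ σ (L ω)| + |c| := abs_add_le _ _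
      _ ≤ B * |L ω| + |c| :=
          add_le_add_left (S16.hbase_abs_le hσ_nonneg hσ_mono hB _) _
      _ ≤ B * C + |c| := add_le_add_left (mul_le_mul_of_nonneg_left hω hB0) _
    have int_g' : Integrable (fun p => q p * σ p - S16.hbase μ σ (q p) - c) ν :=
      (int_qσ.sub int_hq).sub (integrable_const c)
    have hg'01 : (∫ p in (0:ℝ)..1, (q p * σ p - S16.hbase μ σ (q p) - c)) = 0 := by
      rw [intervalIntegral.integral_of_le zero_le_one,
        ← Measure.restrict_congr_set Ioo_ae_eq_Ioc, ← hνdef]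
      have h1' : Integrable (fun u => q u * σ u - S16.hbase μ σ (q u)) ν := int_qσ.sub int_hq
      rw [integral_sub h1' (integrable_const c), ← hcdef, integral_const, probReal_univ]
      simp
    refine ⟨fun x => S16.hbase μ σ x + c, hmeas', hint',
      ⟨fun p => q p * σ p - S16.hbase μ σ (q p) - c, ?_, ?_, ?_⟩, ?_⟩
    · rw [hIccIoo]
      filter_upwards [hq_mem] with p hp
      exact S16.conj_eq hCμ hσ_mono c hp
    · rw [intervalIntegrable_iff_integrableOn_Ioc_of_le zero_le_one]
      have h2 : volume.restrict (Ioc (0:ℝ) 1) = ν := by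
        rw [hνdef]
        exact (Measure.restrict_congr_set Ioo_ae_eq_Ioc).symm
      show Integrable _ (volume.restrict (Ioc (0:ℝ) 1))
      rw [h2]
      exact int_g'
    · rw [hg'01]
    · obtain ⟨ihq, heq⟩ := transfer (fun x => S16.hbase μ σ x + c) hmeas' hint'
      rw [dP_eq, heq, integral_add int_hq (integrable_const c), integral_const,
        probReal_univ]
      have hc' : c = (∫ u, q u * σ u ∂ν) - ∫ u, S16.hbase μ σ (q u) ∂ν := by
        rw [hcdef, integral_sub int_qσ int_hq]
      simp only [ENNReal.toReal_one, one_smul]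
      rw [hc']
      ring
end
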